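/- arXiv:1012.2040 — 5 statements merged into one kernel-verified Lean document; each statement's English description precedes it below -/
import Mathlib

section
/- Let κ be a regular uncountable cardinal and λ ≥ κ a cardinal. If a P_κλ-list is thin, then it is slender. -/
open Cardinal Set

/-! Combinatorial framework: `P_κ λ`, clubs, stationarity, thin/slender lists,
branches, the principles `TP`, `SP`, `ITP`, `ISP`, the ideals `I_IT`, `I_IS`,
ultrafilter notions, ordinal clubs, and square sequences. -/

/-- `P_κ λ`: the collection of subsets of (the set of ordinals below) `λ` of size `< κ`. -/
def Pk (κ lam : Cardinal.{0}) : Set (Set Ordinal.{0}) :=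
  {a | (∀ α ∈ a, α < lam.ord) ∧ #a < Cardinal.lift.{1} κ}

/-- `C` is club in `P_κ X` (represented by `S`, a collection of subsets of `X`):
cofinal in `(S, ⊆)` and closed under unions of `⊆`-increasing chains of length `< κ`. -/
def IsClubIn {X : Type*} (κ : Cardinal.{0}) (S : Set (Set X)) (C : Set (Set X)) : Prop :=
  C ⊆ S ∧ (∀ a ∈ S, ∃ c ∈ C, a ⊆ c) ∧
    ∀ δ : Ordinal.{0}, 0 < δ → δ.card < κ →
      ∀ f : Ordinal.{0} → Set X, (∀ β < δ, f β ∈ C) →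
        (∀ β γ, β ≤ γ → γ < δ → f β ⊆ f γ) →
        (⋃ β ∈ Set.Iio δ, f β) ∈ C

/-- `T` is stationary in `P_κ X`: it meets every club. -/
def IsStatIn {X : Type*} (κ : Cardinal.{0}) (S T : Set (Set X)) : Prop :=
  T ⊆ S ∧ ∀ C, IsClubIn κ S C → (T ∩ C).Nonempty

/-- A `P_κ λ`-list: `d a ⊆ a` for every `a ∈ P_κ λ`. -/
def IsList (κ lam : Cardinal) (d : Set Ordinal → Set Ordinal) : Prop :=
  ∀ a ∈ Pk κ lam, d a ⊆ a

/-- A thin `P_κ λ`-list: on a club of `c`'s, `|{d_a ∩ c : c ⊆ a ∈ P_κ λ}| < κ`. -/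
def IsThin (κ lam : Cardinal) (d : Set Ordinal → Set Ordinal) : Prop :=
  ∃ C, IsClubIn κ (Pk κ lam) C ∧
    ∀ c ∈ C, #{x : Set Ordinal | ∃ a ∈ Pk κ lam, c ⊆ a ∧ x = d a ∩ c} < Cardinal.lift.{1} κ

/-- `H_θ`: sets hereditarily of cardinality `< θ`. -/
def HSet (θ : Cardinal.{0}) : Set ZFSet.{0} :=
  {x | ZFSet.Hereditarily (fun y => #y.toSet < Cardinal.lift.{1} θ) x}

/-- `x` is the von Neumann ordinal corresponding to the ordinal `α`. -/
def IsOrdZF (x : ZFSet) (α : Ordinal) : Prop :=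
  x.IsOrdinal ∧ x.rank = α

/-- The ZFC set `x` codes the set of ordinals `b`. -/
def CodesSet (x : ZFSet) (b : Set Ordinal) : Prop :=
  ∀ y, y ∈ x ↔ ∃ α ∈ b, IsOrdZF y α

/-- `M ∩ λ`: the set of ordinals below `λ` whose von Neumann code lies in `M`. -/
def ordsOf (lam : Cardinal) (M : Set ZFSet) : Set Ordinal :=
  {α | α < lam.ord ∧ ∃ x ∈ M, IsOrdZF x α}

/-- A slender `P_κ λ`-list: for every sufficiently large regular `θ` there is a club
`C ⊆ P_κ H_θ` such that `d_{M ∩ λ} ∩ b ∈ M` for all `M ∈ C` and all countable `b ∈ M`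
with `b ⊆ λ`. -/
def IsSlender (κ lam : Cardinal) (d : Set Ordinal → Set Ordinal) : Prop :=
  ∃ θ₀ : Cardinal, ∀ θ, θ₀ ≤ θ → θ.IsRegular →
    ∃ C, IsClubIn κ {M : Set ZFSet.{0} | M ⊆ HSet θ ∧ #M < Cardinal.lift.{1} κ} C ∧
      ∀ M ∈ C, ∀ b : Set Ordinal, b.Countable → (∀ α ∈ b, α < lam.ord) →
        (∃ x ∈ M, CodesSet x b) →
        ∃ x ∈ M, CodesSet x (d (ordsOf lam M) ∩ b)

/-- `e` is a cofinal branch of the list `d`. -/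
def IsCofBranch (κ lam : Cardinal) (d : Set Ordinal → Set Ordinal) (e : Set Ordinal) : Prop :=
  (∀ α ∈ e, α < lam.ord) ∧
    ∀ a ∈ Pk κ lam, ∃ z ∈ Pk κ lam, a ⊆ z ∧ e ∩ a = d z ∩ a

/-- `e` is an ineffable branch of the list `d`. -/
def IsIneffBranch (κ lam : Cardinal) (d : Set Ordinal → Set Ordinal) (e : Set Ordinal) : Prop :=
  (∀ α ∈ e, α < lam.ord) ∧
    IsStatIn κ (Pk κ lam) {a ∈ Pk κ lam | e ∩ a = d a}

/-- `TP(κ,λ)`: every thin `P_κ λ`-list has a cofinal branch. -/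
def TP (κ lam : Cardinal) : Prop :=
  ∀ d, IsList κ lam d → IsThin κ lam d → ∃ e, IsCofBranch κ lam d e

/-- `SP(κ,λ)`: every slender `P_κ λ`-list has a cofinal branch. -/
def SP (κ lam : Cardinal) : Prop :=
  ∀ d, IsList κ lam d → IsSlender κ lam d → ∃ e, IsCofBranch κ lam d e

/-- `ITP(κ,λ)`: every thin `P_κ λ`-list has an ineffable branch. -/
def ITP (κ lam : Cardinal) : Prop :=
  ∀ d, IsList κ lam d → IsThin κ lam d → ∃ e, IsIneffBranch κ lam d e

/-- `ISP(κ,λ)`: every slender `P_κ λ`-list has an ineffable branch. -/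
def ISP (κ lam : Cardinal) : Prop :=
  ∀ d, IsList κ lam d → IsSlender κ lam d → ∃ e, IsIneffBranch κ lam d e

/-- The list `d` is `A`-effable. -/
def IsEffable (κ lam : Cardinal) (d : Set Ordinal → Set Ordinal) (A : Set (Set Ordinal)) : Prop :=
  ∀ S, S ⊆ A → IsStatIn κ (Pk κ lam) S →
    ∃ a ∈ S, ∃ b ∈ S, a ⊆ b ∧ d a ≠ d b ∩ a

/-- The ideal `I_IT[κ,λ]`. -/
def IIT (κ lam : Cardinal) : Set (Set (Set Ordinal)) :=
  {A | A ⊆ Pk κ lam ∧ ∃ d, IsList κ lam d ∧ IsThin κ lam d ∧ IsEffable κ lam d A}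

/-- The ideal `I_IS[κ,λ]`. -/
def IIS (κ lam : Cardinal) : Set (Set (Set Ordinal)) :=
  {A | A ⊆ Pk κ lam ∧ ∃ d, IsList κ lam d ∧ IsSlender κ lam d ∧ IsEffable κ lam d A}

/-- The filter `F_IT[κ,λ]` dual to `I_IT[κ,λ]`. -/
def FIT (κ lam : Cardinal) : Set (Set (Set Ordinal)) :=
  {A | A ⊆ Pk κ lam ∧ (Pk κ lam \ A) ∈ IIT κ lam}

/-- `U` is an ultrafilter on the set `X`. -/
def IsUFOn {α : Type*} (X : Set α) (U : Set (Set α)) : Prop :=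
  (∀ A ∈ U, A ⊆ X) ∧ X ∈ U ∧ ∅ ∉ U ∧
    (∀ A ∈ U, ∀ B, A ⊆ B → B ⊆ X → B ∈ U) ∧
    (∀ A ∈ U, ∀ B ∈ U, A ∩ B ∈ U) ∧
    (∀ A, A ⊆ X → (A ∈ U ∨ X \ A ∈ U))

/-- `U` is `κ`-complete: closed under intersections of fewer than `κ` of its members. -/
def KComplete (κ : Cardinal.{0}) (X : Set (Set Ordinal)) (U : Set (Set (Set Ordinal))) : Prop :=
  ∀ s : Set (Set (Set Ordinal)), s ⊆ U → #s < Cardinal.lift.{1} κ → X ∩ ⋂₀ s ∈ U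

/-- `U` is fine on `P_κ λ`. -/
def Fine (κ lam : Cardinal) (U : Set (Set (Set Ordinal))) : Prop :=
  ∀ x < lam.ord, {a ∈ Pk κ lam | x ∈ a} ∈ U

/-- `U` is normal on `P_κ λ`: closed under diagonal intersections. -/
def NormalUF (κ lam : Cardinal) (U : Set (Set (Set Ordinal))) : Prop :=
  ∀ A : Ordinal → Set (Set Ordinal), (∀ x < lam.ord, A x ∈ U) →
    {a ∈ Pk κ lam | ∀ x ∈ a, a ∈ A x} ∈ U

/-- `κ` is strongly compact: for every `λ ≥ κ` there is a `κ`-complete fine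
ultrafilter on `P_κ λ`. -/
def IsStronglyCompact (κ : Cardinal) : Prop :=
  ∀ lam : Cardinal, κ ≤ lam →
    ∃ U, IsUFOn (Pk κ lam) U ∧ KComplete κ (Pk κ lam) U ∧ Fine κ lam U

/-- `κ` is supercompact: for every `λ ≥ κ` there is a `κ`-complete normal fine
ultrafilter on `P_κ λ`. -/
def IsSupercompact (κ : Cardinal) : Prop :=
  ∀ lam : Cardinal, κ ≤ lam →
    ∃ U, IsUFOn (Pk κ lam) U ∧ KComplete κ (Pk κ lam) U ∧ Fine κ lam U ∧ NormalUF κ lam U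

/-- `C` is club in the ordinal `o`: unbounded in `o` and closed. -/
def OrdClub (o : Ordinal) (C : Set Ordinal) : Prop :=
  C ⊆ Set.Iio o ∧ (∀ β < o, ∃ γ ∈ C, β ≤ γ) ∧
    ∀ α < o, 0 < α → sSup (C ∩ Set.Iio α) = α → α ∈ C

/-- `S` is stationary in the ordinal `o`. -/
def OrdStat (o : Ordinal) (S : Set Ordinal) : Prop :=
  S ⊆ Set.Iio o ∧ ∀ C, OrdClub o C → (S ∩ C).Nonempty

/-- `δ` is a limit point of `C`: `δ > 0` and `δ = sup (C ∩ δ)`. -/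
def IsLimPt (C : Set Ordinal) (δ : Ordinal) : Prop :=
  0 < δ ∧ sSup (C ∩ Set.Iio δ) = δ

/-- `κ` is an ineffable cardinal. -/
def IsIneffableCard (κ : Cardinal) : Prop :=
  ∀ d : Ordinal → Set Ordinal, (∀ α < κ.ord, d α ⊆ Set.Iio α) →
    ∃ e ⊆ Set.Iio κ.ord, OrdStat κ.ord {α | α < κ.ord ∧ e ∩ Set.Iio α = d α}

/-- A `□_E(κ,λ)`-sequence. -/
def IsSquareSeq (κ : Cardinal.{0}) (lam : Ordinal.{0}) (E : Set Ordinal.{0})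
    (𝒞 : Ordinal.{0} → Set (Set Ordinal.{0})) : Prop :=
  (∀ α, Order.IsSuccLimit α → α ∈ E → α < lam →
    ((𝒞 α).Nonempty ∧ #(𝒞 α) < Cardinal.lift.{1} κ) ∧
      ∀ C ∈ 𝒞 α, OrdClub α C ∧ ∀ β, IsLimPt C β → β ∈ E → C ∩ Set.Iio β ∈ 𝒞 β) ∧
  ¬∃ D, OrdClub lam D ∧ ∀ δ, IsLimPt D δ → δ ∈ E → δ < lam → D ∩ Set.Iio δ ∈ 𝒞 δ

/-- `□_E(κ,λ)` holds. -/
def SquareE (κ : Cardinal.{0}) (lam : Ordinal.{0}) (E : Set Ordinal.{0}) : Prop :=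
  ∃ 𝒞, IsSquareSeq κ lam E 𝒞

/-- `(a, ∈) ≺ (λ, ∈)`: `a` is an elementary substructure of the ordinals below `lam`
(with `∈`, equivalently the order, as the only relation). -/
def ElemSubOrd (lam : Ordinal) (a : Set Ordinal) : Prop :=
  letI := FirstOrder.Language.orderStructure ↥a
  letI := FirstOrder.Language.orderStructure ↥(Set.Iio lam)
  ∃ h : a ⊆ Set.Iio lam,
    ∀ (n : ℕ) (φ : FirstOrder.Language.order.Formula (Fin n)) (v : Fin n → ↥a),
      φ.Realize v ↔ φ.Realize fun i => Set.inclusion h (v i)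

/-- `P'_κ λ`: the members `a` of `P_κ λ` with `a ∩ κ` an ordinal and `(a,∈) ≺ (λ,∈)`. -/
def P'k (κ lam : Cardinal) : Set (Set Ordinal) :=
  {a ∈ Pk κ lam | (∃ β : Ordinal, a ∩ Set.Iio κ.ord = Set.Iio β) ∧ ElemSubOrd lam.ord a}

/-- `κ_a`: the ordinal `a ∩ κ` (for `a ∈ P'_κ λ`). -/
noncomputable def kapOf (κ : Cardinal) (a : Set Ordinal) : Ordinal :=
  sInf {β : Ordinal | a ∩ Set.Iio κ.ord ⊆ Set.Iio β}

namespace TIS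
open ZFSet Ordinal

theorem memOrd {x y : ZFSet} (hx : x.IsOrdinal) (hy : y ∈ x) : y.IsOrdinal := by
  constructor
  · intro a ha b hb
    exact hx.mem_trans' hb ha hy
  · intro a b c hab hbc hcy
    exact hx.mem_trans' hab hbc (hx.subset_of_mem hy hcy)

theorem mem_of_rank_lt : ∀ {x z : ZFSet}, x.IsOrdinal → z.IsOrdinal →
    z.rank < x.rank → z ∈ x := by
  suffices H : ∀ o : Ordinal, ∀ x z : ZFSet, x.IsOrdinal → z.IsOrdinal →
      x.rank = o → z.rank < o → z ∈ x by
    intro x z hx hz h; exact H x.rank x z hx hz rfl h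
  intro o
  induction o using Ordinal.induction with
  | _ o IH =>
    have U : ∀ o' < o, ∀ x z : ZFSet, x.IsOrdinal → z.IsOrdinal →
        x.rank = o' → z.rank = o' → z = x := by
      intro o' ho' x z hx hz hxo hzo
      apply ZFSet.ext
      intro w
      constructor
      · intro hw
        exact IH o' ho' x w hx (memOrd hz hw) hxo (by rw [← hzo]; exact ZFSet.rank_lt_of_mem hw)
      · intro hw
        exact IH o' ho' z w hz (memOrd hx hw) hzo (by rw [← hxo]; exact ZFSet.rank_lt_of_mem hw)
    intro x z hx hz hxo hzo
    obtain ⟨y, hyx, hy⟩ := ZFSet.lt_rank_iff.1 (hxo ▸ hzo)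
    have hyr : y.rank < o := hxo ▸ ZFSet.rank_lt_of_mem hyx
    rcases eq_or_lt_of_le hy with h | h
    · have := U y.rank hyr y z (memOrd hx hyx) hz rfl h
      exact this ▸ hyx
    · exact hx.subset_of_mem hyx (IH y.rank hyr y z (memOrd hx hyx) hz rfl h)

theorem isOrdinal_unique {x z : ZFSet} (hx : x.IsOrdinal) (hz : z.IsOrdinal)
    (h : x.rank = z.rank) : x = z := by
  apply ZFSet.ext
  intro w
  constructor
  · intro hw
    exact mem_of_rank_lt hz (memOrd hx hw) (h ▸ ZFSet.rank_lt_of_mem hw)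
  · intro hw
    exact mem_of_rank_lt hx (memOrd hz hw) (h.symm ▸ ZFSet.rank_lt_of_mem hw)

theorem mem_toSet_iff {x y : ZFSet.{0}} : y ∈ x.toSet ↔ y ∈ x := Iff.rfl

noncomputable def ordZF (o : Ordinal.{0}) : ZFSet.{0} :=
  ZFSet.range.{0,0} (fun i : o.ToType => ordZF ((Ordinal.ToType.mk (o := o)).symm i).val)
termination_by o
decreasing_by exact ((Ordinal.ToType.mk (o := o)).symm i).prop

theorem mem_ordZF {y : ZFSet} {o : Ordinal} : y ∈ ordZF o ↔ ∃ β < o, y = ordZF β := by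
  rw [ordZF, ZFSet.mem_range]
  constructor
  · rintro ⟨i, rfl⟩
    exact ⟨_, ((Ordinal.ToType.mk (o := o)).symm i).prop, rfl⟩
  · rintro ⟨β, hβ, rfl⟩
    refine ⟨Ordinal.ToType.mk (o := o) ⟨β, hβ⟩, ?_⟩
    simp

theorem isOrdinal_ordZF : ∀ o : Ordinal.{0}, (ordZF o).IsOrdinal := by
  intro o
  induction o using Ordinal.induction with
  | _ o IH =>
    constructor
    · intro y hy z hz
      obtain ⟨β, hβ, rfl⟩ := mem_ordZF.1 hy
      obtain ⟨γ, hγ, rfl⟩ := mem_ordZF.1 hz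
      exact mem_ordZF.2 ⟨γ, hγ.trans hβ, rfl⟩
    · intro y z w hyz hzw hw
      obtain ⟨β, hβ, rfl⟩ := mem_ordZF.1 hw
      exact (IH β hβ).mem_trans hyz hzw

theorem rank_ordZF : ∀ o : Ordinal.{0}, (ordZF o).rank = o := by
  intro o
  induction o using Ordinal.induction with
  | _ o IH =>
    apply le_antisymm
    · rw [ZFSet.rank_le_iff]
      intro y hy
      obtain ⟨β, hβ, rfl⟩ := mem_ordZF.1 hy
      rw [IH β hβ]; exact hβ
    · apply le_of_forall_lt
      intro β hβ
      rw [ZFSet.lt_rank_iff]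
      exact ⟨ordZF β, mem_ordZF.2 ⟨β, hβ, rfl⟩, (IH β hβ).ge⟩

theorem isOrdZF_ordZF (o : Ordinal.{0}) : IsOrdZF (ordZF o) o :=
  ⟨isOrdinal_ordZF o, rank_ordZF o⟩

theorem eq_ordZF {x : ZFSet} {o : Ordinal} (h : IsOrdZF x o) : x = ordZF o :=
  isOrdinal_unique h.1 (isOrdinal_ordZF o) (by rw [h.2, rank_ordZF])

theorem toSet_ordZF (o : Ordinal.{0}) : (ordZF o).toSet = ordZF '' (Set.Iio o) := by
  ext y
  simp only [mem_toSet_iff, mem_ordZF, Set.mem_image, Set.mem_Iio]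
  constructor
  · rintro ⟨β, hβ, rfl⟩; exact ⟨β, hβ, rfl⟩
  · rintro ⟨β, hβ, rfl⟩; exact ⟨β, hβ, rfl⟩

theorem mk_toSet_ordZF (o : Ordinal.{0}) :
    #(ordZF o).toSet ≤ Cardinal.lift.{1} o.card := by
  rw [toSet_ordZF, ← Ordinal.mk_Iio_ordinal]
  exact Cardinal.mk_image_le

theorem hered_ordZF {θ : Cardinal.{0}} : ∀ {o : Ordinal.{0}}, o.card < θ →
    ZFSet.Hereditarily (fun y => #y.toSet < Cardinal.lift.{1} θ) (ordZF o) := by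
  suffices H : ∀ o : Ordinal.{0}, o.card < θ →
      ZFSet.Hereditarily (fun y => #y.toSet < Cardinal.lift.{1} θ) (ordZF o) from
    fun {o} => H o
  intro o
  induction o using Ordinal.induction with
  | _ o IH =>
    intro ho
    rw [ZFSet.hereditarily_iff]
    refine ⟨(mk_toSet_ordZF o).trans_lt (Cardinal.lift_lt.2 ho), ?_⟩
    intro y hy
    obtain ⟨β, hβ, rfl⟩ := mem_ordZF.1 hy
    exact IH β hβ ((Ordinal.card_le_card hβ.le).trans_lt ho)

open scoped Classical in
noncomputable def codeC (s : Set Ordinal.{0}) : ZFSet.{0} :=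
  if h : s.Countable ∧ s.Nonempty then
    ZFSet.range.{0,0} (fun n : ℕ => ordZF ((h.1.exists_eq_range h.2).choose n))
  else ∅

theorem codesSet_codeC {s : Set Ordinal.{0}} (hc : s.Countable) :
    CodesSet (codeC s) s := by
  by_cases hs : s.Nonempty
  · rw [codeC, dif_pos ⟨hc, hs⟩]
    have hspec : s = Set.range (hc.exists_eq_range hs).choose :=
      (hc.exists_eq_range hs).choose_spec
    intro y
    rw [ZFSet.mem_range]
    constructor
    · rintro ⟨n, rfl⟩
      refine ⟨(hc.exists_eq_range hs).choose n, ?_, isOrdZF_ordZF _⟩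
      exact hspec.symm.subset (Set.mem_range_self n)
    · rintro ⟨α, hα, hy⟩
      obtain ⟨n, rfl⟩ := hspec.subset hα
      exact ⟨n, (eq_ordZF hy).symm⟩
  · rw [Set.not_nonempty_iff_eq_empty] at hs
    subst hs
    rw [codeC, dif_neg (by simp)]
    intro y
    simp [ZFSet.notMem_empty]

theorem mem_codeC {s : Set Ordinal.{0}} (hc : s.Countable) {y : ZFSet}
    (hy : y ∈ codeC s) : ∃ α ∈ s, y = ordZF α := by
  obtain ⟨α, hα, h⟩ := (codesSet_codeC hc y).1 hy
  exact ⟨α, hα, eq_ordZF h⟩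

theorem toSet_codeC_countable (s : Set Ordinal.{0}) : (codeC s).toSet.Countable := by
  classical
  by_cases h : s.Countable ∧ s.Nonempty
  · rw [codeC, dif_pos h]
    have : (ZFSet.range.{0,0} (fun n : ℕ =>
        ordZF ((h.1.exists_eq_range h.2).choose n))).toSet =
        Set.range (fun n : ℕ => ordZF ((h.1.exists_eq_range h.2).choose n)) := by
      ext y
      rw [mem_toSet_iff, ZFSet.mem_range, Set.mem_range]
    rw [this]
    exact Set.countable_range _
  · rw [codeC, dif_neg h]
    have : (∅ : ZFSet.{0}).toSet = ∅ := by
      ext y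
      simp [mem_toSet_iff, ZFSet.notMem_empty]
    rw [this]
    exact Set.countable_empty

theorem mk_toSet_codeC (s : Set Ordinal.{0}) : #(codeC s).toSet ≤ ℵ₀ := by
  rw [Cardinal.mk_le_aleph0_iff, Set.countable_coe_iff]
  exact toSet_codeC_countable s

theorem hered_codeC {θ : Cardinal.{0}} {s : Set Ordinal.{0}} (hc : s.Countable)
    (hθ : ℵ₀ < θ) (hs : ∀ α ∈ s, α.card < θ) :
    ZFSet.Hereditarily (fun y => #y.toSet < Cardinal.lift.{1} θ) (codeC s) := by
  rw [ZFSet.hereditarily_iff]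
  constructor
  · refine (mk_toSet_codeC s).trans_lt ?_
    have h2 : Cardinal.lift.{1} ℵ₀ < Cardinal.lift.{1} θ := Cardinal.lift_lt.2 hθ
    rwa [Cardinal.lift_aleph0] at h2
  · intro y hy
    obtain ⟨α, hα, rfl⟩ := mem_codeC hc hy
    exact hered_ordZF (hs α hα)

theorem codesSet_unique {x : ZFSet.{0}} {b b' : Set Ordinal.{0}} (h : CodesSet x b)
    (h' : CodesSet x b') : b = b' := by
  have key : ∀ b : Set Ordinal, CodesSet x b → b = {α | ordZF α ∈ x} := by
    intro b hb
    ext α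
    constructor
    · intro hα
      exact (hb (ordZF α)).2 ⟨α, hα, isOrdZF_ordZF α⟩
    · intro hα
      obtain ⟨α', hα', h2⟩ := (hb (ordZF α)).1 hα
      have : α' = α := by rw [← h2.2, rank_ordZF]
      exact this ▸ hα'
  rw [key b h, key b' h']

theorem ordsOf_mono {lam : Cardinal.{0}} {M N : Set ZFSet.{0}} (h : M ⊆ N) :
    ordsOf lam M ⊆ ordsOf lam N := by
  rintro α ⟨h1, x, hx, h2⟩
  exact ⟨h1, x, h hx, h2⟩

theorem mk_ordsOf_le {lam : Cardinal.{0}} {M : Set ZFSet.{0}} :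
    #(ordsOf lam M) ≤ #M := by
  have hmem : ∀ α ∈ ordsOf lam M, ordZF α ∈ M := by
    rintro α ⟨_, x, hx, h2⟩
    exact (eq_ordZF h2) ▸ hx
  have hinj : Function.Injective
      (fun α : ordsOf lam M => (⟨ordZF α.val, hmem α.val α.prop⟩ : M)) := by
    intro α β h
    apply Subtype.ext
    have := congrArg (fun x : M => (x.val).rank) h
    simpa [rank_ordZF] using this
  exact Cardinal.mk_le_of_injective hinj

end TIS

namespace TIS

theorem lift_isRegular {κ : Cardinal.{0}} (h : κ.IsRegular) :
    (Cardinal.lift.{1} κ).IsRegular := by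
  constructor
  · rw [← Cardinal.lift_aleph0.{1,0}]
    exact Cardinal.lift_le.2 h.1
  · rw [← Cardinal.lift_ord, ← Ordinal.lift_cof]
    exact Cardinal.lift_le.2 h.2

theorem mk_biUnion_lt {α β : Type 1} {c : Cardinal.{1}} (hc : c.IsRegular)
    {s : Set α} {f : α → Set β} (hs : #s < c) (hf : ∀ x ∈ s, #(f x) < c) :
    #(⋃ x ∈ s, f x) < c := by
  rw [Set.biUnion_eq_iUnion]
  refine (Cardinal.mk_iUnion_le _).trans_lt ?_
  exact Cardinal.mul_lt_of_lt hc.1 hs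
    (Cardinal.iSup_lt_of_isRegular hc hs (fun i => hf i i.2))

end TIS

theorem thin_implies_slender (κ lam : Cardinal.{0})
    (hreg : κ.IsRegular) (hunc : ℵ₀ < κ) (hle : κ ≤ lam)
    (d : Set Ordinal → Set Ordinal) (hlist : IsList κ lam d)
    (hthin : IsThin κ lam d) :
    IsSlender κ lam d := by
  classical
  obtain ⟨C₀, ⟨hC₀sub, hC₀cof, _⟩, hC₀thin⟩ := hthin
  refine ⟨Order.succ lam, fun θ hθ hθreg => ?_⟩
  have h_lam_th : lam < θ := Order.succ_le_iff.mp hθ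
  have h_k_th : κ < θ := lt_of_le_of_lt hle h_lam_th
  have h_al_th : ℵ₀ < θ := hunc.trans h_k_th
  have h_kreg : (Cardinal.lift.{1} κ).IsRegular := TIS.lift_isRegular hreg
  have h_al_k : ℵ₀ < Cardinal.lift.{1} κ := by
    rw [← Cardinal.lift_aleph0.{1,0}]
    exact Cardinal.lift_lt.2 hunc
  have hcard : ∀ α : Ordinal.{0}, α < lam.ord → α.card < θ := fun α hα =>
    lt_of_le_of_lt (by simpa using Ordinal.card_le_card hα.le) h_lam_th
  have hordH : ∀ α : Ordinal.{0}, α < lam.ord → TIS.ordZF α ∈ HSet θ := fun α hα =>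
    TIS.hered_ordZF (hcard α hα)
  have hcodeH : ∀ s : Set Ordinal.{0}, s.Countable → (∀ α ∈ s, α < lam.ord) →
      TIS.codeC s ∈ HSet θ := fun s hc hb =>
    TIS.hered_codeC hc h_al_th (fun α hα => hcard α (hb α hα))
  set S : Set (Set ZFSet.{0}) := {M | M ⊆ HSet θ ∧ #M < Cardinal.lift.{1} κ} with hS
  -- canonical decoded set of x
  set bF : ZFSet.{0} → Set Ordinal.{0} :=
    fun x => {α | α < lam.ord ∧ TIS.ordZF α ∈ x} with hbF
  have hbF_eq : ∀ x b, (∀ α ∈ b, α < lam.ord) → CodesSet x b → bF x = b := by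
    intro x b hbd hcode
    ext α
    simp only [hbF, Set.mem_setOf_eq]
    constructor
    · rintro ⟨hα, hmem⟩
      obtain ⟨α', hα', h2⟩ := (hcode _).1 hmem
      have : α' = α := by rw [← h2.2, TIS.rank_ordZF]
      exact this ▸ hα'
    · intro hα
      exact ⟨hbd α hα, (hcode _).2 ⟨α, hα, TIS.isOrdZF_ordZF α⟩⟩
  -- choice of covers in C₀
  have hcex : ∀ b : Set Ordinal.{0}, ∃ c, c ∈ C₀ ∧ (b ∈ Pk κ lam → b ⊆ c) := by
    intro b
    by_cases hb : b ∈ Pk κ lam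
    · obtain ⟨c, hc1, hc2⟩ := hC₀cof b hb
      exact ⟨c, hc1, fun _ => hc2⟩
    · have h_emp : (∅ : Set Ordinal.{0}) ∈ Pk κ lam := by
        refine ⟨by simp, ?_⟩
        rw [Cardinal.mk_emptyCollection]
        exact lt_trans Cardinal.aleph0_pos h_al_k
      obtain ⟨c, hc1, _⟩ := hC₀cof ∅ h_emp
      exact ⟨c, hc1, fun h => absurd h hb⟩
  choose cF hcF1 hcF2 using hcex
  -- the new sets to be added for a coder x
  set new : ZFSet.{0} → Set ZFSet.{0} := fun x =>
    if (bF x).Countable ∧ CodesSet x (bF x) then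
      (TIS.ordZF '' cF (bF x)) ∪
        ((fun v => TIS.codeC (v ∩ bF x)) ''
          {v | ∃ a ∈ Pk κ lam, cF (bF x) ⊆ a ∧ v = d a ∩ cF (bF x)})
    else ∅ with hnew
  have hbFbd : ∀ x, ∀ α ∈ bF x, α < lam.ord := fun x α hα => hα.1
  have hnewH : ∀ x, new x ⊆ HSet θ := by
    intro x y hy
    simp only [hnew] at hy
    split_ifs at hy with hcond
    · rcases hy with ⟨α, hα, rfl⟩ | ⟨v, hv, rfl⟩
      · exact hordH α ((hC₀sub (hcF1 (bF x))).1 α hα)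
      · exact hcodeH _ (hcond.1.mono Set.inter_subset_right)
          (fun α hα => (hα.2 : α ∈ bF x).1)
    · exact absurd hy (Set.notMem_empty y)
  have hnewcard : ∀ x, #(new x) < Cardinal.lift.{1} κ := by
    intro x
    simp only [hnew]
    split_ifs with hcond
    · refine (Cardinal.mk_union_le _ _).trans_lt
        (Cardinal.add_lt_of_lt h_kreg.1 ?_ ?_)
      · exact Cardinal.mk_image_le.trans_lt (hC₀sub (hcF1 (bF x))).2
      · exact Cardinal.mk_image_le.trans_lt (hC₀thin _ (hcF1 (bF x)))
    · rw [Cardinal.mk_emptyCollection]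
      exact lt_trans Cardinal.aleph0_pos h_al_k
  set step : Set ZFSet.{0} → Set ZFSet.{0} := fun M => M ∪ ⋃ x ∈ M, new x with hstep
  have hstep_sub : ∀ M, M ⊆ step M := fun M => Set.subset_union_left
  have hstepS : ∀ M ∈ S, step M ∈ S := by
    rintro M ⟨hM1, hM2⟩
    constructor
    · refine Set.union_subset hM1 (Set.iUnion₂_subset fun x _ => hnewH x)
    · refine (Cardinal.mk_union_le _ _).trans_lt
        (Cardinal.add_lt_of_lt h_kreg.1 hM2 ?_)
      exact TIS.mk_biUnion_lt h_kreg hM2 (fun x _ => hnewcard x)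
  -- the club
  set P : Set ZFSet.{0} → Prop := fun M =>
    ∀ x ∈ M, ∀ b : Set Ordinal.{0}, b.Countable → (∀ α ∈ b, α < lam.ord) →
      CodesSet x b →
      ∃ c ∈ C₀, b ⊆ c ∧ c ⊆ ordsOf lam M ∧
        ∀ a ∈ Pk κ lam, c ⊆ a → ∃ y ∈ M, CodesSet y (d a ∩ c ∩ b) with hPdef
  refine ⟨{M | M ∈ S ∧ P M}, ⟨fun M hM => hM.1, ?_, ?_⟩, ?_⟩
  · -- cofinality
    intro M₀ hM₀
    set g : ℕ → Set ZFSet.{0} := fun n => step^[n] M₀ with hg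
    have hgsucc : ∀ n, g (n + 1) = step (g n) := fun n =>
      Function.iterate_succ_apply' step n M₀
    have hgS : ∀ n, g n ∈ S := by
      intro n
      induction n with
      | zero => exact hM₀
      | succ n ih => rw [hgsucc n]; exact hstepS _ ih
    have hgsubω : ∀ n, g n ⊆ ⋃ m, g m := fun n => Set.subset_iUnion g n
    refine ⟨⋃ n, g n, ⟨⟨?_, ?_⟩, ?_⟩, hgsubω 0⟩
    · exact Set.iUnion_subset fun n => (hgS n).1
    · have hre : (⋃ n, g n) = ⋃ N ∈ Set.range g, N := by
        rw [Set.biUnion_range]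
      rw [hre]
      refine TIS.mk_biUnion_lt h_kreg ?_ (fun N hN => ?_)
      · exact ((Set.countable_range g).le_aleph0).trans_lt h_al_k
      · obtain ⟨n, rfl⟩ := hN
        exact (hgS n).2
    · -- P holds for the union
      intro x hx b hbc hbd hcode
      obtain ⟨n, hxn⟩ := Set.mem_iUnion.1 hx
      have hbPk : b ∈ Pk κ lam := by
        refine ⟨hbd, ?_⟩
        refine lt_of_le_of_lt ?_ h_al_k
        rw [Cardinal.mk_le_aleph0_iff, Set.countable_coe_iff]
        exact hbc
      have hbeq : bF x = b := hbF_eq x b hbd hcode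
      have hcond : (bF x).Countable ∧ CodesSet x (bF x) := by
        rw [hbeq]; exact ⟨hbc, hcode⟩
      have hcC₀ : cF (bF x) ∈ C₀ := hcF1 _
      have hbsub : b ⊆ cF (bF x) := by
        have h := hcF2 (bF x) (by rw [hbeq]; exact hbPk)
        intro α hα
        exact h (by rw [hbeq]; exact hα)
      refine ⟨cF (bF x), hcC₀, hbsub, ?_, ?_⟩
      · intro α hα
        have h1 : TIS.ordZF α ∈ new x := by
          simp only [hnew]; rw [if_pos hcond]
          exact Or.inl ⟨α, hα, rfl⟩
        have h2 : TIS.ordZF α ∈ g (n + 1) := by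
          rw [hgsucc n]
          exact Set.subset_union_right (Set.mem_biUnion hxn h1)
        exact ⟨(hC₀sub hcC₀).1 α hα, TIS.ordZF α, hgsubω _ h2, TIS.isOrdZF_ordZF α⟩
      · intro a haPk hca
        have h1 : TIS.codeC (d a ∩ cF (bF x) ∩ bF x) ∈ new x := by
          simp only [hnew]; rw [if_pos hcond]
          exact Or.inr ⟨d a ∩ cF (bF x), ⟨a, haPk, hca, rfl⟩, rfl⟩
        have h1' : TIS.codeC (d a ∩ cF (bF x) ∩ b) ∈ new x := by
          rw [← hbeq]; exact h1
        have h2 : TIS.codeC (d a ∩ cF (bF x) ∩ b) ∈ g (n + 1) := by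
          rw [hgsucc n]
          exact Set.subset_union_right (Set.mem_biUnion hxn h1')
        exact ⟨_, hgsubω _ h2, TIS.codesSet_codeC (hbc.mono Set.inter_subset_right)⟩
  · -- closure under unions of chains
    intro δ hδ0 hδκ f hfC hfmono
    have hsub : ∀ β < δ, f β ⊆ ⋃ γ ∈ Set.Iio δ, f γ := fun β hβ =>
      Set.subset_biUnion_of_mem hβ
    refine ⟨⟨?_, ?_⟩, ?_⟩
    · exact Set.iUnion₂_subset fun β hβ => ((hfC β hβ).1).1
    · refine TIS.mk_biUnion_lt h_kreg ?_ (fun β hβ => ((hfC β hβ).1).2)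
      rw [Ordinal.mk_Iio_ordinal]
      exact Cardinal.lift_lt.2 hδκ
    · intro x hx b hbc hbd hcode
      obtain ⟨β, hβ, hxβ⟩ := Set.mem_iUnion₂.1 hx
      obtain ⟨c, hc, h1, h2, h3⟩ := (hfC β hβ).2 x hxβ b hbc hbd hcode
      refine ⟨c, hc, h1, h2.trans (TIS.ordsOf_mono (hsub β hβ)), ?_⟩
      intro a ha hca
      obtain ⟨y, hy, hcs⟩ := h3 a ha hca
      exact ⟨y, hsub β hβ hy, hcs⟩
  · -- slenderness property on the club
    rintro M ⟨⟨hMH, hMc⟩, hPM⟩ b hbc hbd ⟨x, hxM, hcode⟩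
    obtain ⟨c, hcC₀, hbsub, hcords, h3⟩ := hPM x hxM b hbc hbd hcode
    have haPk : ordsOf lam M ∈ Pk κ lam :=
      ⟨fun α hα => hα.1, TIS.mk_ordsOf_le.trans_lt hMc⟩
    obtain ⟨y, hyM, hcs⟩ := h3 (ordsOf lam M) haPk hcords
    refine ⟨y, hyM, ?_⟩
    have heq : d (ordsOf lam M) ∩ c ∩ b = d (ordsOf lam M) ∩ b := by
      rw [Set.inter_assoc, Set.inter_eq_self_of_subset_right hbsub]
    rwa [heq] at hcs
end

section
/- If κ is an inaccessible cardinal and λ ≥ κ, then TP(κ,λ) holds if and only if SP(κ,λ) holds, and ITP(κ,λ) holds if and only if ISP(κ,λ) holds. -/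
open Cardinal Set

noncomputable def ordZF (o : Ordinal.{0}) : ZFSet.{0} :=
  ZFSet.range fun i : o.ToType => ordZF ((((Ordinal.ToType.mk (o := o))).symm i : Set.Iio o) : Ordinal)
termination_by o
decreasing_by exact (((Ordinal.ToType.mk (o := o))).symm i).2

theorem mem_ordZF {y : ZFSet.{0}} {o : Ordinal.{0}} :
    y ∈ ordZF o ↔ ∃ β < o, y = ordZF β := by
  rw [ordZF, ZFSet.mem_range]
  constructor
  · rintro ⟨i, rfl⟩
    exact ⟨_, (((Ordinal.ToType.mk (o := o))).symm i).2, rfl⟩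
  · rintro ⟨β, hβ, rfl⟩
    exact ⟨((Ordinal.ToType.mk (o := o))) ⟨β, hβ⟩, by simp⟩

theorem isOrdinal_ordZF : ∀ o : Ordinal.{0}, (ordZF o).IsOrdinal := by
  intro o
  induction o using Ordinal.induction with
  | _ o IH =>
    constructor
    · intro y hy
      obtain ⟨β, hβ, rfl⟩ := mem_ordZF.1 hy
      intro z hz
      obtain ⟨γ, hγ, rfl⟩ := mem_ordZF.1 hz
      exact mem_ordZF.2 ⟨γ, hγ.trans hβ, rfl⟩
    · intro y z w hyz hzw hw
      obtain ⟨β, hβ, rfl⟩ := mem_ordZF.1 hw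
      exact (IH β hβ).isTransitive.mem_trans hyz hzw

theorem rank_ordZF : ∀ o : Ordinal.{0}, (ordZF o).rank = o := by
  intro o
  induction o using Ordinal.induction with
  | _ o IH =>
    apply le_antisymm
    · rw [ZFSet.rank_le_iff]
      intro y hy
      obtain ⟨β, hβ, rfl⟩ := mem_ordZF.1 hy
      rw [IH β hβ]; exact hβ
    · apply le_of_forall_lt
      intro β hβ
      have := ZFSet.rank_lt_of_mem (mem_ordZF.2 ⟨β, hβ, rfl⟩)
      rwa [IH β hβ] at this

theorem ordZF_injective : Function.Injective ordZF := by
  intro a b h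
  rw [← rank_ordZF a, ← rank_ordZF b, h]

theorem isOrdinal_mem {x y : ZFSet.{0}} (hx : x.IsOrdinal) (hy : y ∈ x) : y.IsOrdinal := by
  constructor
  · intro a ha b hb
    exact hx.mem_trans' hb ha hy
  · intro a b c hab hbc hc
    exact hx.mem_trans' hab hbc (hx.isTransitive.mem_trans hc hy)

theorem eq_ordZF_rank : ∀ x : ZFSet.{0}, x.IsOrdinal → x = ordZF x.rank := by
  intro x
  induction x using WellFounded.induction ZFSet.mem_wf with
  | _ x IH =>
    intro hx
    apply ZFSet.ext
    intro y
    rw [mem_ordZF]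
    constructor
    · intro hy
      exact ⟨y.rank, ZFSet.rank_lt_of_mem hy, IH y hy (isOrdinal_mem hx hy)⟩
    · rintro ⟨β, hβ, rfl⟩
      obtain ⟨w, hw, hβw⟩ := ZFSet.lt_rank_iff.1 hβ
      have hwo := isOrdinal_mem hx hw
      have hweq := IH w hw hwo
      rcases eq_or_lt_of_le hβw with h | h
      · rw [← h] at hweq; rwa [← hweq]
      · have : ordZF β ∈ w := by
          rw [hweq]; exact mem_ordZF.2 ⟨β, h, rfl⟩
        exact hx.isTransitive.mem_trans this hw


section Aux


theorem isOrdZF_ordZF (o : Ordinal.{0}) : IsOrdZF (ordZF o) o :=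
  ⟨isOrdinal_ordZF o, rank_ordZF o⟩

theorem IsOrdZF.eq {y : ZFSet.{0}} {α : Ordinal.{0}} (h : IsOrdZF y α) : y = ordZF α := by
  have := eq_ordZF_rank y h.1
  rwa [h.2] at this

theorem mk_toSet_ordZF_le (o : Ordinal.{0}) : #(ordZF o).toSet ≤ Cardinal.lift.{1} o.card := by
  rw [← Ordinal.mk_Iio_ordinal]
  have hf : ∀ y : (ordZF o).toSet, ZFSet.rank y.1 ∈ Set.Iio o := by
    intro y
    obtain ⟨β, hβ, h⟩ := mem_ordZF.1 y.2
    rw [h, rank_ordZF]; exact hβ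
  apply Cardinal.mk_le_of_injective (f := fun y => (⟨ZFSet.rank y.1, hf y⟩ : Set.Iio o))
  intro y z h
  simp only [Subtype.mk.injEq] at h
  obtain ⟨β, hβ, hy⟩ := mem_ordZF.1 y.2
  obtain ⟨γ, hγ, hz⟩ := mem_ordZF.1 z.2
  apply Subtype.ext
  rw [hy, hz] at h ⊢
  rw [rank_ordZF, rank_ordZF] at h
  rw [h]

theorem lift_card_le_mk_toSet_ordZF (o : Ordinal.{0}) :
    Cardinal.lift.{1} o.card ≤ #(ordZF o).toSet := by
  rw [← Ordinal.mk_Iio_ordinal]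
  apply Cardinal.mk_le_of_injective
    (f := fun β : Set.Iio o => (⟨ordZF β.1, mem_ordZF.2 ⟨β.1, β.2, rfl⟩⟩ : (ordZF o).toSet))
  intro a b h
  simp only [Subtype.mk.injEq] at h
  exact Subtype.ext (ordZF_injective h)

theorem hered_ordZF (θ : Cardinal.{0}) : ∀ o : Ordinal.{0}, o.card < θ →
    ZFSet.Hereditarily (fun y => #y.toSet < Cardinal.lift.{1} θ) (ordZF o) := by
  intro o
  induction o using Ordinal.induction with
  | _ o IH =>
    intro ho
    rw [ZFSet.hereditarily_iff]
    refine ⟨(mk_toSet_ordZF_le o).trans_lt (Cardinal.lift_lt.2 ho), ?_⟩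
    intro y hy
    obtain ⟨β, hβ, rfl⟩ := mem_ordZF.1 hy
    exact IH β hβ (lt_of_le_of_lt (Ordinal.card_le_card hβ.le) ho)

theorem exists_code (b : Set Ordinal.{0}) (hb : b.Countable) :
    ∃ x : ZFSet.{0}, CodesSet x b ∧
      ∀ θ : Cardinal.{0}, ℵ₀ < θ → (∀ α ∈ b, α.card < θ) → x ∈ HSet θ := by
  rcases b.eq_empty_or_nonempty with rfl | hne
  · refine ⟨∅, fun y => ?_, fun θ hθ _ => ?_⟩
    · simp [ZFSet.notMem_empty]
    · rw [HSet, Set.mem_setOf_eq, ZFSet.hereditarily_iff]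
      refine ⟨?_, fun y hy => absurd hy (ZFSet.notMem_empty y)⟩
      have : (∅ : ZFSet.{0}).toSet = ∅ := by
        ext y; exact iff_of_false (ZFSet.notMem_empty y) (Set.notMem_empty y)
      rw [this, Cardinal.mk_emptyCollection]
      have : (0 : Cardinal.{1}) < ℵ₀ := aleph0_pos
      exact this.trans (by rw [← Cardinal.lift_aleph0.{1,0}]; exact Cardinal.lift_lt.2 hθ)
  · obtain ⟨f, rfl⟩ := hb.exists_eq_range hne
    refine ⟨ZFSet.range (fun n => ordZF (f n)), fun y => ?_, fun θ hθ hcard => ?_⟩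
    · rw [ZFSet.mem_range]
      constructor
      · rintro ⟨n, rfl⟩
        exact ⟨f n, ⟨n, rfl⟩, isOrdZF_ordZF _⟩
      · rintro ⟨α, ⟨n, rfl⟩, hy⟩
        exact ⟨n, hy.eq.symm⟩
    · rw [HSet, Set.mem_setOf_eq, ZFSet.hereditarily_iff]
      refine ⟨?_, fun y hy => ?_⟩
      · have h1 : (ZFSet.range fun n => ordZF (f n)).toSet = Set.range fun n => ordZF (f n) := by
          ext y; exact ZFSet.mem_range
        have h2 : #(Set.range fun n => ordZF (f n)) ≤ ℵ₀ := by
          simpa using Cardinal.mk_range_le_lift (f := fun n => ordZF (f n))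
        rw [h1]
        exact h2.trans_lt (by rw [← Cardinal.lift_aleph0.{1,0}]; exact Cardinal.lift_lt.2 hθ)
      · rw [ZFSet.mem_range] at hy
        obtain ⟨n, rfl⟩ := hy
        exact hered_ordZF θ (f n) (hcard _ ⟨n, rfl⟩)

def decode (x : ZFSet.{0}) : Set Ordinal.{0} := {α | ∃ y ∈ x, IsOrdZF y α}

theorem CodesSet.decode_eq {x : ZFSet.{0}} {b : Set Ordinal.{0}} (h : CodesSet x b) :
    decode x = b := by
  ext α
  constructor
  · rintro ⟨y, hy, ho⟩
    obtain ⟨α', hα', hy'⟩ := (h y).1 hy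
    have : α = α' := by rw [← ho.2, ← hy'.2]
    rwa [this]
  · intro hα
    exact ⟨ordZF α, (h _).2 ⟨α, hα, isOrdZF_ordZF α⟩, isOrdZF_ordZF α⟩

open scoped Classical in
noncomputable def codeOf (b : Set Ordinal.{0}) : ZFSet.{0} :=
  if h : b.Countable then (exists_code b h).choose else ∅

theorem codeOf_spec {b : Set Ordinal.{0}} (hb : b.Countable) : CodesSet (codeOf b) b := by
  rw [codeOf, dif_pos hb]
  exact (exists_code b hb).choose_spec.1

theorem codeOf_mem_HSet {b : Set Ordinal.{0}} (hb : b.Countable) {θ : Cardinal.{0}}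
    (hθ : ℵ₀ < θ) (h : ∀ α ∈ b, α.card < θ) : codeOf b ∈ HSet θ := by
  rw [codeOf, dif_pos hb]; exact (exists_code b hb).choose_spec.2 θ hθ h


theorem lift_isRegular {κ : Cardinal.{0}} (h : κ.IsRegular) :
    (Cardinal.lift.{1} κ).IsRegular := by
  constructor
  · rw [← Cardinal.lift_aleph0.{1,0}]; exact Cardinal.lift_le.2 h.1
  · rw [← Cardinal.lift_ord, ← Ordinal.lift_cof]
    exact Cardinal.lift_le.2 h.2

theorem mk_biUnion_lt_lift {X : Type 1} {κ : Cardinal.{0}} (hreg : κ.IsRegular)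
    {δ : Ordinal.{0}} (hδ : δ.card < κ) (f : Ordinal.{0} → Set X)
    (hf : ∀ β < δ, #(f β) < Cardinal.lift.{1} κ) :
    #(⋃ β ∈ Set.Iio δ, f β) < Cardinal.lift.{1} κ := by
  have hreg' := lift_isRegular hreg
  have hι : #(Set.Iio δ) < Cardinal.lift.{1} κ := by
    rw [Ordinal.mk_Iio_ordinal]; exact Cardinal.lift_lt.2 hδ
  apply lt_of_le_of_lt (Cardinal.mk_biUnion_le f (Set.Iio δ))
  apply Cardinal.mul_lt_of_lt hreg'.1 hι
  exact Cardinal.iSup_lt_of_isRegular hreg' hι fun i => hf i.1 i.2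

theorem mk_iUnion_nat_lt {X : Type 1} {κ : Cardinal.{0}} (hreg : κ.IsRegular)
    (haleph : ℵ₀ < κ) (f : ℕ → Set X) (hf : ∀ n, #(f n) < Cardinal.lift.{1} κ) :
    #(⋃ n, f n) < Cardinal.lift.{1} κ := by
  have hreg' := lift_isRegular hreg
  have h := Cardinal.mk_iUnion_le_lift (f := f)
  simp only [Cardinal.lift_id'] at h
  apply lt_of_le_of_lt h
  have hι : Cardinal.lift.{1} #ℕ < Cardinal.lift.{1} κ := by
    have hn : #ℕ = ℵ₀ := Cardinal.mk_nat
    rw [hn]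
    exact Cardinal.lift_lt.2 haleph
  apply Cardinal.mul_lt_of_lt hreg'.1 hι
  exact Cardinal.iSup_lt_lift_of_isRegular hreg' hι hf

open scoped Classical in
noncomputable def FF (x : ZFSet.{0}) : Set ZFSet.{0} :=
  if (decode x).Countable then codeOf '' 𝒫 (decode x) else ∅

theorem FF_spec {x : ZFSet.{0}} (hc : (decode x).Countable) {b' : Set Ordinal.{0}}
    (hb' : b' ⊆ decode x) : codeOf b' ∈ FF x := by
  rw [FF, if_pos hc]
  exact ⟨b', hb', rfl⟩

theorem mk_FF_lt {κ : Cardinal.{0}} (hκ : κ.IsInaccessible) (x : ZFSet.{0}) :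
    #(FF x) < Cardinal.lift.{1} κ := by
  rw [FF]
  split_ifs with hc
  · have h2 : #(decode x) ≤ (ℵ₀ : Cardinal.{1}) := by
      have := hc.to_subtype
      exact Cardinal.mk_le_aleph0
    calc #(codeOf '' 𝒫 (decode x)) ≤ #(𝒫 (decode x)) := Cardinal.mk_image_le
      _ = 2 ^ #(decode x) := Cardinal.mk_powerset (decode x)
      _ ≤ 2 ^ (ℵ₀ : Cardinal.{1}) :=
          Cardinal.power_le_power_left (by norm_num) h2
      _ = Cardinal.lift.{1} (2 ^ ℵ₀) := by
          rw [Cardinal.lift_power, Cardinal.lift_aleph0]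
          norm_num
      _ < Cardinal.lift.{1} κ := Cardinal.lift_lt.2 (hκ.isStrongPrelimit hκ.1)
  · have h0 : (0 : Cardinal.{1}) < ℵ₀ := aleph0_pos
    simp only [Cardinal.mk_emptyCollection]
    exact h0.trans (by rw [← Cardinal.lift_aleph0.{1,0}]; exact Cardinal.lift_lt.2 hκ.1)

theorem FF_mem_HSet {x y : ZFSet.{0}} {θ : Cardinal.{0}} (haleph : ℵ₀ < θ)
    (hx : x ∈ HSet θ) (hy : y ∈ FF x) : y ∈ HSet θ := by
  rw [FF] at hy
  split_ifs at hy with hc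
  · obtain ⟨b', hb', rfl⟩ := hy
    refine codeOf_mem_HSet (hc.mono hb') haleph ?_
    intro α hα
    obtain ⟨z, hz, ho⟩ := hb' hα
    have hzh : #z.toSet < Cardinal.lift.{1} θ := (hx.mem hz).self
    have := lift_card_le_mk_toSet_ordZF α
    rw [← ho.eq] at this
    exact Cardinal.lift_lt.1 (this.trans_lt hzh)
  · exact absurd hy (Set.notMem_empty y)

noncomputable def gStep (M : Set ZFSet.{0}) : Set ZFSet.{0} := M ∪ ⋃ x ∈ M, FF x

theorem gStep_sub {M : Set ZFSet.{0}} : M ⊆ gStep M := Set.subset_union_left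

theorem gStep_S {κ θ : Cardinal.{0}} (hκ : κ.IsInaccessible) (haleph : ℵ₀ < θ)
    {M : Set ZFSet.{0}} (h1 : M ⊆ HSet θ) (h2 : #M < Cardinal.lift.{1} κ) :
    gStep M ⊆ HSet θ ∧ #(gStep M) < Cardinal.lift.{1} κ := by
  constructor
  · rintro y (hy | hy)
    · exact h1 hy
    · obtain ⟨x, hx, hyx⟩ := Set.mem_iUnion₂.1 hy
      exact FF_mem_HSet haleph (h1 hx) hyx
  · have hreg' := lift_isRegular hκ.isRegular
    apply lt_of_le_of_lt (Cardinal.mk_union_le _ _)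
    apply Cardinal.add_lt_of_lt hreg'.1 h2
    apply lt_of_le_of_lt (Cardinal.mk_biUnion_le FF M)
    apply Cardinal.mul_lt_of_lt hreg'.1 h2
    exact Cardinal.iSup_lt_of_isRegular hreg' h2 fun i => mk_FF_lt hκ i.1

theorem slender_all {κ lam : Cardinal.{0}} (hκ : κ.IsInaccessible) (hle : κ ≤ lam)
    (d : Set Ordinal.{0} → Set Ordinal.{0}) : IsSlender κ lam d := by
  refine ⟨Order.succ lam, fun θ hθ _ => ?_⟩
  have hlamθ : lam < θ := (Order.lt_succ lam).trans_le hθ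
  have haleph : ℵ₀ < θ := (hκ.1.trans_le hle).trans hlamθ
  refine ⟨{M | (M ⊆ HSet θ ∧ #M < Cardinal.lift.{1} κ) ∧
      ∀ b : Set Ordinal.{0}, b.Countable →
        (∃ x ∈ M, CodesSet x b) → ∀ b' ⊆ b, codeOf b' ∈ M},
    ⟨fun M hM => hM.1, ?_, ?_⟩, ?_⟩
  · -- cofinal
    intro a ha
    set Mseq : ℕ → Set ZFSet.{0} := fun n => gStep^[n] a with hMseq
    have hsucc : ∀ n, Mseq (n + 1) = gStep (Mseq n) := fun n =>
      Function.iterate_succ_apply' gStep n a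
    have hmemS : ∀ n, Mseq n ⊆ HSet θ ∧ #(Mseq n) < Cardinal.lift.{1} κ := by
      intro n
      induction n with
      | zero => exact ⟨ha.1, ha.2⟩
      | succ n ih =>
        rw [hsucc n]
        exact gStep_S hκ haleph ih.1 ih.2
    refine ⟨⋃ n, Mseq n, ⟨⟨Set.iUnion_subset fun n => (hmemS n).1,
        mk_iUnion_nat_lt hκ.isRegular hκ.1 Mseq fun n => (hmemS n).2⟩, ?_⟩, ?_⟩
    · intro b hbc ⟨x, hx, hcode⟩ b' hb'
      obtain ⟨n, hxn⟩ := Set.mem_iUnion.1 hx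
      have hdx : decode x = b := hcode.decode_eq
      have hFF : codeOf b' ∈ FF x := by
        refine FF_spec ?_ ?_ <;> rw [hdx]
        · exact hbc
        · exact hb'
      refine Set.mem_iUnion.2 ⟨n + 1, ?_⟩
      rw [hsucc n]
      exact Or.inr (Set.mem_biUnion hxn hFF)
    · exact Set.subset_iUnion Mseq 0
  · -- chain closure
    intro δ hδpos hδcard f hfC hmono
    refine ⟨⟨?_, mk_biUnion_lt_lift hκ.isRegular hδcard f fun β hβ => (hfC β hβ).1.2⟩, ?_⟩
    · exact Set.iUnion₂_subset fun β hβ => (hfC β hβ).1.1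
    · intro b hbc ⟨x, hx, hcode⟩ b' hb'
      obtain ⟨β, hβ, hxβ⟩ := Set.mem_iUnion₂.1 hx
      exact Set.mem_biUnion hβ ((hfC β hβ).2 b hbc ⟨x, hxβ, hcode⟩ b' hb')
  · -- slender property
    intro M hM b hbc hbound hex
    exact ⟨codeOf (d (ordsOf lam M) ∩ b), hM.2 b hbc hex _ Set.inter_subset_right,
      codeOf_spec (hbc.mono Set.inter_subset_right)⟩

theorem thin_all {κ lam : Cardinal.{0}} (hκ : κ.IsInaccessible)
    (d : Set Ordinal.{0} → Set Ordinal.{0}) : IsThin κ lam d := by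
  refine ⟨Pk κ lam, ⟨subset_rfl, fun a ha => ⟨a, ha, subset_rfl⟩, ?_⟩, ?_⟩
  · intro δ hδpos hδcard f hf hmono
    constructor
    · intro α hα
      obtain ⟨β, hβ, hαβ⟩ := Set.mem_iUnion₂.1 hα
      exact (hf β hβ).1 α hαβ
    · exact mk_biUnion_lt_lift hκ.isRegular hδcard f fun β hβ => (hf β hβ).2
  · intro c hc
    have hsub : {x : Set Ordinal.{0} | ∃ a ∈ Pk κ lam, c ⊆ a ∧ x = d a ∩ c} ⊆ 𝒫 c := by
      rintro x ⟨a, _, _, rfl⟩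
      exact Set.inter_subset_right
    refine lt_of_le_of_lt
      ((Cardinal.mk_le_mk_of_subset hsub).trans_eq (Cardinal.mk_powerset c)) ?_
    obtain ⟨μ, hμ, hμe⟩ := Cardinal.lt_lift_iff.1 hc.2
    rw [← hμe, ← Cardinal.lift_two.{1,0}, ← Cardinal.lift_power]
    exact Cardinal.lift_lt.2 (hκ.isStrongPrelimit hμ)


end Aux

theorem inaccessible_TP_iff_SP_and_ITP_iff_ISP (κ lam : Cardinal.{0})
    (hκ : κ.IsInaccessible) (hle : κ ≤ lam) :
    (TP κ lam ↔ SP κ lam) ∧ (ITP κ lam ↔ ISP κ lam) := by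
  refine ⟨⟨fun h d hl _ => h d hl (thin_all hκ d), fun h d hl _ => h d hl (slender_all hκ hle d)⟩,
    ⟨fun h d hl _ => h d hl (thin_all hκ d), fun h d hl _ => h d hl (slender_all hκ hle d)⟩⟩
end

section
/- An inaccessible cardinal κ is ineffable if and only if ITP(κ,κ) holds. -/
open Cardinal Set

namespace ITPAux
open scoped Classical

variable {κ : Cardinal.{0}}

lemma isRegular_lift (h : κ.IsRegular) : (Cardinal.lift.{1} κ).IsRegular := by
  constructor
  · simpa using Cardinal.lift_le.{1}.2 h.1
  · rw [← Cardinal.lift_ord, ← Ordinal.lift_cof, h.cof_eq]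

lemma bound_of_small (hreg : κ.IsRegular) {s : Set Ordinal.{0}}
    (hs : ∀ x ∈ s, x < κ.ord) (hcard : #s < Cardinal.lift.{1} κ) :
    ∃ b < κ.ord, ∀ x ∈ s, x < b := by
  set e := Ordinal.ToType.mk (o := κ.ord) with he
  set s₀ : Set ↥(Set.Iio κ.ord) := {x : ↥(Set.Iio κ.ord) | ↑x ∈ s} with hs₀
  have hcong : #s₀ = #s := by
    refine Cardinal.mk_congr ⟨fun x => ⟨x.1.1, x.2⟩, fun x => ⟨⟨x.1, hs x.1 x.2⟩, x.2⟩,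
      fun x => rfl, fun x => rfl⟩
  set s' : Set κ.ord.ToType := (fun x => e x) '' s₀ with hs'
  have hmk : Cardinal.lift.{1} #s' = #s₀ := by
    have := Cardinal.mk_image_eq_lift (fun x => e x) s₀ (e.injective)
    simpa using this
  have hlt : #s' < κ.ord.cof := by
    rw [hreg.cof_eq]
    rw [← Cardinal.lift_lt.{_, 1}, hmk, hcong]
    exact hcard
  haveI : IsWellOrder κ.ord.ToType (· < ·) := { }
  have hbdd : Bounded (· < ·) s' := by
    have hnc : ¬ IsCofinal s' := fun hc =>
      (Order.cof_le hc).not_gt (by rw [Ordinal.cof_toType]; exact hlt)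
    simp only [IsCofinal, not_forall, not_exists, not_and, not_le] at hnc
    obtain ⟨a, ha⟩ := hnc
    exact ⟨a, ha⟩
  obtain ⟨a, ha⟩ := hbdd
  refine ⟨(e.symm a).1, (e.symm a).2, fun x hx => ?_⟩
  have : e ⟨x, hs x hx⟩ < a := ha _ ⟨⟨x, hs x hx⟩, hx, rfl⟩
  have := (OrderIso.lt_iff_lt e.symm).2 this
  rw [OrderIso.symm_apply_apply] at this
  exact this

lemma Iio_mem_Pk {α : Ordinal} (h : α < κ.ord) : Set.Iio α ∈ Pk κ κ :=
  ⟨fun β hβ => hβ.trans h, by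
    rw [Ordinal.mk_Iio_ordinal]
    exact Cardinal.lift_lt.2 (Cardinal.lt_ord.1 h)⟩


lemma aleph0_le_liftk (hreg : κ.IsRegular) : ℵ₀ ≤ Cardinal.lift.{1} κ := by
  simpa using Cardinal.lift_le.{1}.2 hreg.1

lemma union_small (hreg : κ.IsRegular) {β : Ordinal.{0}} (hβ : β < κ.ord)
    {f : Ordinal.{0} → Set Ordinal.{0}} (hf : ∀ γ < β, f γ ∈ Pk κ κ) :
    ((⋃ γ : Set.Iio β, f γ.1) ∪ Set.Iio β) ∈ Pk κ κ := by
  constructor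
  · rintro x (hx | hx)
    · obtain ⟨γ, hγ⟩ := Set.mem_iUnion.1 hx
      exact (hf γ.1 γ.2).1 x hγ
    · exact hx.trans hβ
  · have hIio : #(Set.Iio β) < Cardinal.lift.{1} κ := by
      rw [Ordinal.mk_Iio_ordinal]
      exact Cardinal.lift_lt.2 (Cardinal.lt_ord.1 hβ)
    refine (Cardinal.mk_union_le _ _).trans_lt
      (Cardinal.add_lt_of_lt (aleph0_le_liftk hreg) ?_ hIio)
    refine (Cardinal.mk_iUnion_le _).trans_lt
      (Cardinal.mul_lt_of_lt (aleph0_le_liftk hreg) hIio ?_)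
    refine Cardinal.iSup_lt_lift_of_isRegular.{1, 0} (isRegular_lift hreg) ?_
      (fun γ => (hf γ.1 γ.2).2)
    simpa [Ordinal.mk_Iio_ordinal] using Cardinal.lift_lt.2 (Cardinal.lt_ord.1 hβ)

/-- The image of an ordinal club under `Iio` is club in `P_κ κ`. -/
lemma down_club (hreg : κ.IsRegular) {C : Set Ordinal.{0}} (hC : OrdClub κ.ord C) :
    IsClubIn κ (Pk κ κ) {x | ∃ α ∈ C, x = Set.Iio α} := by
  obtain ⟨hCsub, hCunb, hCcl⟩ := hC
  refine ⟨?_, ?_, ?_⟩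
  · rintro x ⟨α, hα, rfl⟩
    exact Iio_mem_Pk (hCsub hα)
  · intro a ha
    obtain ⟨b, hb, hab⟩ := bound_of_small hreg ha.1 ha.2
    obtain ⟨γ, hγC, hbγ⟩ := hCunb b hb
    exact ⟨Set.Iio γ, ⟨γ, hγC, rfl⟩, fun x hx => lt_of_lt_of_le (hab x hx) hbγ⟩
  · intro δ hδ0 hδcard f hfC hfmono
    set F : Ordinal → Ordinal := fun β => sSup {γ | f β = Set.Iio γ} with hF
    have hFspec : ∀ β < δ, F β ∈ C ∧ f β = Set.Iio (F β) := by
      intro β hβ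
      obtain ⟨γ, hγC, hγ⟩ := hfC β hβ
      have : {γ' | f β = Set.Iio γ'} = {γ} := by
        ext γ'
        simp only [Set.mem_setOf_eq, Set.mem_singleton_iff]
        constructor
        · intro h; exact (Set.Iio_injective (hγ ▸ h)).symm
        · rintro rfl; exact hγ
      rw [hF]; simp only [this, csSup_singleton]
      exact ⟨hγC, hγ⟩
    set s : Set Ordinal.{0} := {γ | ∃ β < δ, f β = Set.Iio γ} with hs
    have hsF : s ⊆ F '' (Set.Iio δ) := by
      rintro γ ⟨β, hβ, hγ⟩
      refine ⟨β, hβ, ?_⟩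
      have h2 : Set.Iio γ = Set.Iio (F β) := hγ.symm.trans (hFspec β hβ).2
      exact (Set.Iio_injective h2).symm
    have hsC : s ⊆ C := by
      rintro γ ⟨β, hβ, hγ⟩
      have h2 : Set.Iio γ = Set.Iio (F β) := hγ.symm.trans (hFspec β hβ).2
      rw [Set.Iio_injective h2]
      exact (hFspec β hβ).1
    have hsk : ∀ x ∈ s, x < κ.ord := fun x hx => hCsub (hsC hx)
    have hscard : #s < Cardinal.lift.{1} κ := by
      refine lt_of_le_of_lt (Cardinal.mk_le_mk_of_subset hsF) ?_
      refine lt_of_le_of_lt (Cardinal.mk_image_le) ?_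
      rw [Ordinal.mk_Iio_ordinal]
      exact Cardinal.lift_lt.2 hδcard
    have hsne : s.Nonempty := by
      obtain ⟨γC, hγC, hγ⟩ := hfC 0 hδ0
      exact ⟨γC, 0, hδ0, hγ⟩
    obtain ⟨b, hb, hsb⟩ := bound_of_small hreg hsk hscard
    set σ : Ordinal := sSup s with hσ
    have hbdds : BddAbove s := ⟨b, fun x hx => (hsb x hx).le⟩
    have hσb : σ ≤ b := csSup_le hsne fun x hx => (hsb x hx).le
    have hσκ : σ < κ.ord := lt_of_le_of_lt hσb hb
    have hUnion : (⋃ β ∈ Set.Iio δ, f β) = Set.Iio σ := by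
      ext x
      simp only [Set.mem_iUnion, Set.mem_Iio, exists_prop]
      constructor
      · rintro ⟨β, hβ, hx⟩
        have h2 := (hFspec β hβ).2
        have hxF : x < F β := by rw [h2] at hx; exact hx
        have : F β ∈ s := ⟨β, hβ, h2⟩
        exact lt_of_lt_of_le hxF (le_csSup hbdds this)
      · intro hx
        obtain ⟨γ, hγs, hxγ⟩ := (lt_csSup_iff hbdds hsne).1 hx
        obtain ⟨β, hβ, hfβ⟩ := hγs
        exact ⟨β, hβ, by rw [hfβ]; exact hxγ⟩
    have hσC : σ ∈ C := by
      by_cases hmem : σ ∈ s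
      · exact hsC hmem
      · have hslt : ∀ γ ∈ s, γ < σ := fun γ hγ =>
          lt_of_le_of_ne (le_csSup hbdds hγ) (fun h => hmem (h ▸ hγ))
      -- 0 < σ
        have hσpos : 0 < σ := by
          obtain ⟨γ, hγ⟩ := hsne
          exact lt_of_le_of_lt (zero_le : (0 : Ordinal) ≤ γ) (hslt γ hγ)
        refine hCcl σ hσκ hσpos ?_
        apply le_antisymm
        · refine csSup_le ⟨hsne.choose, hsC hsne.choose_spec, hslt _ hsne.choose_spec⟩
            fun x hx => hx.2.le
        · refine csSup_le_csSup ⟨κ.ord, fun x hx => (hCsub hx.1).le⟩ hsne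
            fun γ hγ => ⟨hsC hγ, hslt γ hγ⟩
    rw [hUnion]
    exact ⟨σ, hσC, rfl⟩


noncomputable def aChain (C : Set (Set Ordinal.{0})) : Ordinal.{0} → Set Ordinal.{0} :=
  Ordinal.lt_wf.fix fun β rec =>
    if h : ∃ c ∈ C, ((⋃ γ : Set.Iio β, rec γ.1 γ.2) ∪ Set.Iio β) ⊆ c then h.choose else ∅

lemma aChain_eq (C : Set (Set Ordinal.{0})) (β : Ordinal.{0}) : aChain C β =
    if h : ∃ c ∈ C, ((⋃ γ : Set.Iio β, aChain C γ.1) ∪ Set.Iio β) ⊆ c then h.choose else ∅ :=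
  WellFounded.fix_eq _ _ _

lemma aChain_spec (hreg : κ.IsRegular) {C : Set (Set Ordinal.{0})}
    (hC : IsClubIn κ (Pk κ κ) C) :
    ∀ β, β < κ.ord → aChain C β ∈ C ∧ (∀ γ < β, aChain C γ ⊆ aChain C β) ∧
      Set.Iio β ⊆ aChain C β := by
  intro β
  induction β using Ordinal.induction with
  | _ β IH =>
    intro hβ
    have hu : ((⋃ γ : Set.Iio β, aChain C γ.1) ∪ Set.Iio β) ∈ Pk κ κ :=
      union_small hreg hβ (fun γ hγ => hC.1 (IH γ hγ (hγ.trans hβ)).1)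
    have hex : ∃ c ∈ C, ((⋃ γ : Set.Iio β, aChain C γ.1) ∪ Set.Iio β) ⊆ c :=
      hC.2.1 _ hu
    have heq : aChain C β = hex.choose := by rw [aChain_eq, dif_pos hex]
    obtain ⟨hcC, hsub⟩ := hex.choose_spec
    refine ⟨heq ▸ hcC, ?_, ?_⟩
    · intro γ hγ
      rw [heq]
      exact fun x hx => hsub (Set.mem_union_left _
        (Set.mem_iUnion.2 ⟨⟨γ, hγ⟩, hx⟩))
    · rw [heq]
      exact fun x hx => hsub (Set.mem_union_right _ hx)

/-- Every ordinal-stationary set of `Iio α`'s is stationary in `P_κ κ`. -/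
lemma up_stat (hreg : κ.IsRegular) (hℵ : ℵ₀ < κ) {S : Set Ordinal.{0}}
    (hS : OrdStat κ.ord S) :
    IsStatIn κ (Pk κ κ) {x | ∃ α ∈ S, x = Set.Iio α} := by
  constructor
  · rintro x ⟨α, hα, rfl⟩
    exact Iio_mem_Pk (hS.1 hα)
  intro C hC
  have key := aChain_spec hreg hC
  set a := aChain C with ha
  set g : Ordinal.{0} → Ordinal.{0} :=
    fun β => sInf {b | b < κ.ord ∧ ∀ x ∈ a β, x < b} with hgdef
  have hg : ∀ β < κ.ord, g β < κ.ord ∧ ∀ x ∈ a β, x < g β := by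
    intro β hβ
    have hmem : a β ∈ Pk κ κ := hC.1 (key β hβ).1
    obtain ⟨b, hb, hab⟩ := bound_of_small hreg hmem.1 hmem.2
    exact csInf_mem (⟨b, hb, hab⟩ : {b | b < κ.ord ∧ ∀ x ∈ a β, x < b}.Nonempty)
  set E : Set Ordinal.{0} :=
    {α | α < κ.ord ∧ 0 < α ∧ (∀ β < α, β + 1 < α) ∧ ∀ β < α, g β < α} with hEdef
  have hℵ' : ℵ₀ < Cardinal.lift.{1} κ := by
    simpa using Cardinal.lift_lt.{_,1}.2 hℵ
  have hlim : Order.IsSuccLimit κ.ord := Cardinal.isSuccLimit_ord hreg.1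
  have hEclub : OrdClub κ.ord E := by
    refine ⟨fun α hα => hα.1, ?_, ?_⟩
    · -- unbounded
      intro β₀ hβ₀
      set step : Ordinal.{0} → Ordinal.{0} :=
        fun x => sInf {b | b < κ.ord ∧ x < b ∧ ∀ β < x, g β < b} with hstepdef
      have hstep : ∀ x < κ.ord, step x < κ.ord ∧ x < step x ∧ ∀ β < x, g β < step x := by
        intro x hx
        have hts : ∀ y ∈ insert x ((fun β => g β) '' Set.Iio x), y < κ.ord := by
          rintro y (rfl | ⟨β, hβ, rfl⟩)
          · exact hx
          · exact (hg β (hβ.trans hx)).1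
        have htc : #(insert x ((fun β => g β) '' Set.Iio x) : Set Ordinal.{0}) <
            Cardinal.lift.{1} κ := by
          refine (Cardinal.mk_insert_le).trans_lt
            (Cardinal.add_lt_of_lt (aleph0_le_liftk hreg) ?_ ?_)
          · refine Cardinal.mk_image_le.trans_lt ?_
            rw [Ordinal.mk_Iio_ordinal]
            exact Cardinal.lift_lt.2 (Cardinal.lt_ord.1 hx)
          · exact Cardinal.one_lt_aleph0.trans hℵ'
        obtain ⟨b, hbκ, hb⟩ := bound_of_small hreg hts htc
        have hne : {b | b < κ.ord ∧ x < b ∧ ∀ β < x, g β < b}.Nonempty :=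
          ⟨b, hbκ, hb x (Set.mem_insert _ _),
            fun β hβ => hb _ (Set.mem_insert_of_mem _ ⟨β, hβ, rfl⟩)⟩
        exact csInf_mem hne
      set h : ℕ → Ordinal.{0} := fun n => Nat.recAux (β₀ + 1) (fun _ ih => step ih) n with hh
      have hsucc0 : β₀ + 1 < κ.ord := by
        rw [Ordinal.add_one_eq_succ]; exact hlim.succ_lt hβ₀
      have hhκ : ∀ n, h n < κ.ord := by
        intro n
        induction n with
        | zero => exact hsucc0
        | succ n ihn => exact (hstep (h n) ihn).1
      have hmono : ∀ n, h n < h (n + 1) := fun n => (hstep (h n) (hhκ n)).2.1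
      obtain ⟨b, hbκ, hb⟩ := bound_of_small hreg
        (s := Set.range h) (fun x ⟨n, hn⟩ => hn ▸ hhκ n)
        (by
          refine lt_of_le_of_lt ?_ hℵ'
          have := Cardinal.mk_range_le_lift (f := h)
          simpa using this)
      have hbdd : BddAbove (Set.range h) := ⟨b, fun x hx => (hb x hx).le⟩
      set α := ⨆ n, h n with hα
      have hle : ∀ n, h n ≤ α := fun n => le_ciSup hbdd n
      have hlt : ∀ n, h n < α := fun n => lt_of_lt_of_le (hmono n) (hle (n + 1))
      have hακ : α < κ.ord := lt_of_le_of_lt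
        (ciSup_le fun n => (hb _ (Set.mem_range_self n)).le) hbκ
      have hless : ∀ β < α, ∃ n, β < h n := by
        intro β hβ
        by_contra hcon
        push_neg at hcon
        exact absurd (ciSup_le hcon) (not_le.2 hβ)
      refine ⟨α, ⟨hακ, ?_, ?_, ?_⟩, ?_⟩
      · have h0 : (0 : Ordinal) < β₀ + 1 :=
          lt_of_le_of_lt (zero_le : (0 : Ordinal) ≤ β₀)
            (by rw [Ordinal.add_one_eq_succ]; exact Order.lt_succ β₀)
        exact lt_of_lt_of_le h0 (hle 0)
      · intro β hβ
        obtain ⟨n, hn⟩ := hless β hβ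
        have : β + 1 ≤ h n := by
          rw [Ordinal.add_one_eq_succ]; exact Order.succ_le_of_lt hn
        exact lt_of_le_of_lt this (hlt n)
      · intro β hβ
        obtain ⟨n, hn⟩ := hless β hβ
        exact lt_of_lt_of_le ((hstep (h n) (hhκ n)).2.2 β hn) (hle (n + 1))
      · have hb0 : β₀ < h 0 := by
          show β₀ < β₀ + 1
          rw [Ordinal.add_one_eq_succ]; exact Order.lt_succ β₀
        exact le_trans hb0.le (hle 0)
    · -- closed
      intro α hακ hαpos hsup
      have hne : (E ∩ Set.Iio α).Nonempty := by
        by_contra hcon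
        rw [Set.not_nonempty_iff_eq_empty] at hcon
        rw [hcon, csSup_empty] at hsup
        exact absurd hsup.symm hαpos.ne'
      have hbtw : ∀ β < α, ∃ γ ∈ E ∩ Set.Iio α, β < γ := by
        intro β hβ
        by_contra hcon
        push_neg at hcon
        have : sSup (E ∩ Set.Iio α) ≤ β := csSup_le hne hcon
        rw [hsup] at this
        exact absurd this (not_le.2 hβ)
      refine ⟨hακ, hαpos, ?_, ?_⟩
      · intro β hβ
        obtain ⟨γ, ⟨hγE, hγα⟩, hβγ⟩ := hbtw β hβ
        exact lt_trans (hγE.2.2.1 β hβγ) hγα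
      · intro β hβ
        obtain ⟨γ, ⟨hγE, hγα⟩, hβγ⟩ := hbtw β hβ
        exact lt_trans (hγE.2.2.2 β hβγ) hγα
  obtain ⟨α, hαS, hαE⟩ := hS.2 E hEclub
  have hIioC : Set.Iio α ∈ C := by
    have hunion := hC.2.2 α hαE.2.1 (Cardinal.lt_ord.1 hαE.1) a
      (fun β hβ => (key β (hβ.trans hαE.1)).1)
      (fun β γ hβγ hγ => by
        rcases eq_or_lt_of_le hβγ with rfl | hlt
        · exact subset_rfl
        · exact (key γ (hγ.trans hαE.1)).2.1 β hlt)
    have heq : (⋃ β ∈ Set.Iio α, a β) = Set.Iio α := by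
      ext x
      simp only [Set.mem_iUnion, Set.mem_Iio, exists_prop]
      constructor
      · rintro ⟨β, hβ, hx⟩
        exact lt_trans ((hg β (hβ.trans hαE.1)).2 x hx) (hαE.2.2.2 β hβ)
      · intro hx
        have hx1 : x + 1 < α := hαE.2.2.1 x hx
        refine ⟨x + 1, hx1, ?_⟩
        apply (key (x + 1) (hx1.trans hαE.1)).2.2
        rw [Ordinal.add_one_eq_succ]
        exact Order.lt_succ x
    rwa [heq] at hunion
  exact ⟨Set.Iio α, ⟨α, hαS, rfl⟩, hIioC⟩

end ITPAux


theorem inaccessible_ineffable_iff_ITP (κ : Cardinal.{0})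
    (hκ : κ.IsInaccessible) :
    IsIneffableCard κ ↔ ITP κ κ := by
  have hreg := hκ.isRegular
  obtain ⟨hℵ, -, hsl⟩ := hκ
  constructor
  · -- ineffable → ITP
    intro hIneff d hlist _hthin
    set d' : Ordinal → Set Ordinal := fun α => d (Set.Iio α) ∩ Set.Iio α with hd'def
    have hd' : ∀ α < κ.ord, d' α ⊆ Set.Iio α := fun α _ => Set.inter_subset_right
    obtain ⟨e, he, hstat⟩ := hIneff d' hd'
    refine ⟨e, fun α hα => he hα, ?_⟩
    have hup := ITPAux.up_stat hreg hℵ hstat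
    constructor
    · exact fun a ha => ha.1
    · intro C hC
      obtain ⟨x, ⟨α, hαS, rfl⟩, hxC⟩ := hup.2 C hC
      have hPk : Set.Iio α ∈ Pk κ κ := ITPAux.Iio_mem_Pk hαS.1
      refine ⟨Set.Iio α, ⟨hPk, ?_⟩, hxC⟩
      have h1 : e ∩ Set.Iio α = d (Set.Iio α) ∩ Set.Iio α := hαS.2
      rw [h1]
      exact Set.inter_eq_left.2 (hlist _ hPk)
  · -- ITP → ineffable
    intro hITP d hd
    set D : Set Ordinal → Set Ordinal :=
      fun a => {ξ ∈ a | ∃ α, a = Set.Iio α ∧ ξ ∈ d α} with hDdef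
    have hlist : IsList κ κ D := fun a _ ξ hξ => hξ.1
    have hthin : IsThin κ κ D := by
      refine ⟨{x | ∃ α ∈ Set.Iio κ.ord, x = Set.Iio α},
        ITPAux.down_club hreg ⟨subset_rfl, fun β hβ => ⟨β, hβ, le_rfl⟩,
          fun α hα _ _ => hα⟩, ?_⟩
      rintro c ⟨γ, hγ, rfl⟩
      refine lt_of_le_of_lt (Cardinal.mk_le_mk_of_subset (t := 𝒫 (Set.Iio γ)) ?_) ?_
      · rintro x ⟨a, _, _, rfl⟩
        exact Set.inter_subset_right
      · rw [Cardinal.mk_powerset, Ordinal.mk_Iio_ordinal, ← Cardinal.lift_two_power]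
        exact Cardinal.lift_lt.2 (hsl (Cardinal.lt_ord.1 hγ))
    obtain ⟨e, hIB⟩ := hITP D hlist hthin
    refine ⟨e, fun x hx => hIB.1 x hx, ?_⟩
    constructor
    · exact fun α hα => hα.1
    · intro Cl hCl
      have hdc := ITPAux.down_club hreg hCl
      obtain ⟨x, hxT, ⟨α, hαC, rfl⟩⟩ := hIB.2.2 _ hdc
      have hακ : α < κ.ord := hCl.1 hαC
      refine ⟨α, ⟨hακ, ?_⟩, hαC⟩
      have hDeq : D (Set.Iio α) = d α := by
        ext ξ
        constructor
        · rintro ⟨_, α', heq, hξ⟩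
          rwa [← Set.Iio_injective heq] at hξ
        · intro hξ
          exact ⟨hd α hακ hξ, α, rfl, hξ⟩
      rw [← hDeq]
      exact hxT.2
end

section
/- A regular uncountable cardinal κ is strongly compact if and only if for every λ ≥ κ, every P_κλ-list has a cofinal branch. -/
open Cardinal Set

section Aux

open Cardinal Set

lemma forward_aux (κ : Cardinal.{0}) (hreg : κ.IsRegular)
    (hsc : IsStronglyCompact κ) (lam : Cardinal.{0}) (hlam : κ ≤ lam)
    (d : Set Ordinal → Set Ordinal) : ∃ e, IsCofBranch κ lam d e := by
  classical
  obtain ⟨U, hUF, hcomp, hfine⟩ := hsc lam hlam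
  obtain ⟨hsub, hX, hempty, hup, hbin, hultra⟩ := hUF
  have hℵ : (ℵ₀ : Cardinal.{1}) ≤ Cardinal.lift.{1} κ :=
    Cardinal.aleph0_le_lift.mpr hreg.aleph0_le
  set B : Ordinal → Set (Set Ordinal) := fun α => {z | z ∈ Pk κ lam ∧ α ∈ d z} with hB
  refine ⟨{α | α < lam.ord ∧ B α ∈ U}, fun α hα => hα.1, ?_⟩
  intro a ha
  set s : Set (Set (Set Ordinal)) :=
    ((fun α => if B α ∈ U then B α else Pk κ lam \ B α) '' a) ∪
      ((fun α => {z | z ∈ Pk κ lam ∧ α ∈ z}) '' a) with hs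
  have hsU : s ⊆ U := by
    rintro A (⟨α, hαa, rfl⟩ | ⟨α, hαa, rfl⟩)
    · by_cases h : B α ∈ U
      · simpa [h] using h
      · simp only [h, if_false]
        rcases hultra (B α) (fun z hz => hz.1) with h' | h'
        · exact absurd h' h
        · exact h'
    · exact hfine α (ha.1 α hαa)
  have hscard : #s < Cardinal.lift.{1} κ := by
    refine lt_of_le_of_lt (le_trans (Cardinal.mk_union_le _ _)
      (add_le_add Cardinal.mk_image_le Cardinal.mk_image_le)) ?_
    exact Cardinal.add_lt_of_lt hℵ ha.2 ha.2
  have hzmem := hcomp s hsU hscard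
  have hne : (Pk κ lam ∩ ⋂₀ s).Nonempty := by
    rcases Set.eq_empty_or_nonempty (Pk κ lam ∩ ⋂₀ s) with h | h
    · exact absurd (h ▸ hzmem) hempty
    · exact h
  obtain ⟨z, hzPk, hzint⟩ := hne
  refine ⟨z, hzPk, fun α hαa => ?_, ?_⟩
  · have : z ∈ {z | z ∈ Pk κ lam ∧ α ∈ z} :=
      hzint _ (Or.inr ⟨α, hαa, rfl⟩)
    exact this.2
  · ext α
    simp only [Set.mem_inter_iff]
    constructor
    · rintro ⟨⟨hαlt, hαU⟩, hαa⟩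
      have : z ∈ B α := by
        have := hzint _ (Or.inl ⟨α, hαa, rfl⟩)
        simpa [hαU] using this
      exact ⟨this.2, hαa⟩
    · rintro ⟨hαd, hαa⟩
      refine ⟨⟨ha.1 α hαa, ?_⟩, hαa⟩
      by_contra h
      have : z ∈ Pk κ lam \ B α := by
        have := hzint _ (Or.inl ⟨α, hαa, rfl⟩)
        simpa [h] using this
      exact this.2 ⟨hzPk, hαd⟩

end Aux
section Aux2

open Cardinal Set

lemma backward_aux (κ : Cardinal.{0}) (hreg : κ.IsRegular)
    (H : ∀ lam : Cardinal.{0}, κ ≤ lam →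
      ∀ d, IsList κ lam d → ∃ e, IsCofBranch κ lam d e) :
    IsStronglyCompact κ := by
  classical
  intro lam hlam
  have hℵ : (ℵ₀ : Cardinal.{1}) ≤ Cardinal.lift.{1} κ :=
    Cardinal.aleph0_le_lift.mpr hreg.aleph0_le
  have hfin : ∀ a : Set Ordinal.{0}, a.Finite → #a < Cardinal.lift.{1} κ :=
    fun a ha => lt_of_lt_of_le ha.lt_aleph0 hℵ
  set μ : Cardinal.{0} := (2 : Cardinal.{0}) ^ ((2 : Cardinal.{0}) ^ lam) with hμ
  have hlamμ : lam ≤ μ := by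
    rw [hμ]
    exact le_of_lt (lt_trans (Cardinal.cantor lam) (Cardinal.cantor _))
  have hκμ : κ ≤ μ := hlam.trans hlamμ
  -- cardinality computation
  have hPkle : #(Pk κ lam) ≤ (2 : Cardinal.{1}) ^ Cardinal.lift.{1} lam := by
    have hinj : Function.Injective
        (fun a : ↥(Pk κ lam) => {x : ↥(Set.Iio lam.ord) | ↑x ∈ a.1}) := by
      rintro ⟨a, ha⟩ ⟨b, hb⟩ hab
      replace hab : {x : ↥(Set.Iio lam.ord) | ↑x ∈ a} = {x : ↥(Set.Iio lam.ord) | ↑x ∈ b} := hab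
      ext1
      ext α
      constructor
      · intro hα
        have hlt : α < lam.ord := ha.1 α hα
        have : (⟨α, hlt⟩ : ↥(Set.Iio lam.ord)) ∈
            {x : ↥(Set.Iio lam.ord) | ↑x ∈ a} := hα
        rw [hab] at this
        exact this
      · intro hα
        have hlt : α < lam.ord := hb.1 α hα
        have : (⟨α, hlt⟩ : ↥(Set.Iio lam.ord)) ∈
            {x : ↥(Set.Iio lam.ord) | ↑x ∈ b} := hα
        rw [← hab] at this
        exact this
    calc #(Pk κ lam) ≤ #(Set ↥(Set.Iio lam.ord)) := Cardinal.mk_le_of_injective hinj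
      _ = (2 : Cardinal.{1}) ^ #(↥(Set.Iio lam.ord)) := Cardinal.mk_set
      _ = (2 : Cardinal.{1}) ^ Cardinal.lift.{1} lam := by
          rw [Ordinal.mk_Iio_ordinal, Cardinal.card_ord]
  have hcard : #(Set ↥(Pk κ lam)) ≤ #(↥(Set.Iio μ.ord)) := by
    rw [Cardinal.mk_set, Ordinal.mk_Iio_ordinal, Cardinal.card_ord, hμ]
    calc (2 : Cardinal.{1}) ^ #(Pk κ lam)
        ≤ (2 : Cardinal.{1}) ^ ((2 : Cardinal.{1}) ^ Cardinal.lift.{1} lam) :=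
          Cardinal.power_le_power_left two_ne_zero hPkle
      _ = Cardinal.lift.{1} ((2 : Cardinal.{0}) ^ ((2 : Cardinal.{0}) ^ lam)) := by
          rw [Cardinal.lift_power, Cardinal.lift_power]
          simp
  obtain ⟨f⟩ := Cardinal.le_def _ _ |>.mp hcard
  set G : ↥(Set.Iio μ.ord) → Set ↥(Pk κ lam) := Function.invFun f with hG
  have hGsurj : Function.Surjective G := Function.invFun_surjective f.injective
  set F : Ordinal → Set (Set Ordinal) := fun ξ =>
    if h : ξ < μ.ord then
      {a | ∃ ha : a ∈ Pk κ lam, (⟨a, ha⟩ : ↥(Pk κ lam)) ∈ G ⟨ξ, h⟩} else ∅ with hF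
  have hFsub : ∀ ξ, F ξ ⊆ Pk κ lam := by
    intro ξ a ha
    by_cases h : ξ < μ.ord
    · have hh : F ξ = {a | ∃ ha : a ∈ Pk κ lam, (⟨a, ha⟩ : ↥(Pk κ lam)) ∈ G ⟨ξ, h⟩} :=
        dif_pos h
      rw [hh] at ha
      exact ha.1
    · have hh : F ξ = ∅ := dif_neg h
      rw [hh] at ha
      exact absurd ha (Set.notMem_empty a)
  have hFsurj : ∀ A, A ⊆ Pk κ lam → ∃ ξ, ξ < μ.ord ∧ F ξ = A := by
    intro A hA
    obtain ⟨p, hp⟩ := hGsurj {a : ↥(Pk κ lam) | ↑a ∈ A}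
    refine ⟨p.1, p.2, ?_⟩
    have hFp : F p.1 = {a | ∃ ha : a ∈ Pk κ lam, (⟨a, ha⟩ : ↥(Pk κ lam)) ∈ G ⟨p.1, p.2⟩} :=
      dif_pos p.2
    rw [hFp]
    ext a
    simp only [Set.mem_setOf_eq]
    constructor
    · rintro ⟨ha, h⟩
      rw [hp] at h
      exact h
    · intro haA
      refine ⟨hA haA, ?_⟩
      rw [hp]
      exact haA
  -- the list
  set D : Set Ordinal → Set Ordinal :=
    fun b => {ξ | ξ ∈ b ∧ b ∩ Set.Iio lam.ord ∈ F ξ} with hD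
  obtain ⟨e, he1, he2⟩ := H μ hκμ D (fun b _ ξ hξ => hξ.1)
  have hzcap : ∀ z ∈ Pk κ μ, z ∩ Set.Iio lam.ord ∈ Pk κ lam := by
    intro z hz
    exact ⟨fun α hα => hα.2,
      lt_of_le_of_lt (Cardinal.mk_le_mk_of_subset Set.inter_subset_left) hz.2⟩
  have hkey : ∀ a : Set Ordinal, (∀ ξ ∈ a, ξ < μ.ord) → #a < Cardinal.lift.{1} κ →
      ∃ z ∈ Pk κ μ, a ⊆ z ∧ ∀ ξ ∈ a, (ξ ∈ e ↔ z ∩ Set.Iio lam.ord ∈ F ξ) := by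
    intro a h1 h2
    obtain ⟨z, hz, hsubz, heq⟩ := he2 a ⟨h1, h2⟩
    refine ⟨z, hz, hsubz, fun ξ hξ => ?_⟩
    constructor
    · intro hξe
      have : ξ ∈ D z ∩ a := heq ▸ (⟨hξe, hξ⟩ : ξ ∈ e ∩ a)
      exact this.1.2
    · intro hFz
      have : ξ ∈ D z ∩ a := ⟨⟨hsubz hξ, hFz⟩, hξ⟩
      rw [← heq] at this
      exact this.1
  set U : Set (Set (Set Ordinal)) := {A | ∃ ξ, ξ ∈ e ∧ F ξ = A} with hU
  have hUsub : ∀ A ∈ U, A ⊆ Pk κ lam := by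
    intro A hAU
    rw [hU] at hAU
    obtain ⟨ξ, _, rfl⟩ := hAU
    exact hFsub ξ
  have heμ : ∀ ξ ∈ e, ξ < μ.ord := he1
  -- X ∈ U
  have hXU : Pk κ lam ∈ U := by
    obtain ⟨ξ, hξ, hFξ⟩ := hFsurj (Pk κ lam) subset_rfl
    obtain ⟨z, hz, _, hiff⟩ := hkey {ξ} (by rintro x rfl; exact hξ)
      (hfin _ (Set.finite_singleton ξ))
    have : z ∩ Set.Iio lam.ord ∈ F ξ := by rw [hFξ]; exact hzcap z hz
    exact ⟨ξ, (hiff ξ rfl).mpr this, hFξ⟩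
  refine ⟨U, ⟨hUsub, hXU, ?_, ?_, ?_, ?_⟩, ?_, ?_⟩
  · -- ∅ ∉ U
    intro hcon
    rw [hU] at hcon
    obtain ⟨ξ, hξe, hFξ⟩ := hcon
    obtain ⟨z, hz, _, hiff⟩ := hkey {ξ} (by rintro x rfl; exact heμ _ hξe)
      (hfin _ (Set.finite_singleton ξ))
    have := (hiff ξ rfl).mp hξe
    rw [hFξ] at this
    exact this
  · -- upward
    intro A hAU B hAB hBsub
    rw [hU] at hAU
    obtain ⟨ξA, hξAe, hFA⟩ := hAU
    obtain ⟨ξB, hξB, hFB⟩ := hFsurj B hBsub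
    obtain ⟨z, hz, _, hiff⟩ := hkey {ξA, ξB}
      (by rintro x (rfl | rfl); exacts [heμ _ hξAe, hξB])
      (hfin _ ((Set.finite_singleton _).insert _))
    have h1 : z ∩ Set.Iio lam.ord ∈ A := by
      rw [← hFA]; exact (hiff ξA (Or.inl rfl)).mp hξAe
    have h2 : ξB ∈ e := (hiff ξB (Or.inr rfl)).mpr (by rw [hFB]; exact hAB h1)
    exact ⟨ξB, h2, hFB⟩
  · -- binary intersection
    intro A hAU B hBU
    rw [hU] at hAU hBU
    obtain ⟨ξA, hξAe, hFA⟩ := hAU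
    obtain ⟨ξB, hξBe, hFB⟩ := hBU
    obtain ⟨ξC, hξC, hFC⟩ := hFsurj (A ∩ B)
      (fun x hx => (hFA ▸ hFsub ξA) hx.1)
    obtain ⟨z, hz, _, hiff⟩ := hkey {ξA, ξB, ξC}
      (by rintro x (rfl | rfl | rfl); exacts [heμ _ hξAe, heμ _ hξBe, hξC])
      (hfin _ (((Set.finite_singleton _).insert _).insert _))
    have h1 : z ∩ Set.Iio lam.ord ∈ A := by
      rw [← hFA]; exact (hiff ξA (Or.inl rfl)).mp hξAe
    have h2 : z ∩ Set.Iio lam.ord ∈ B := by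
      rw [← hFB]; exact (hiff ξB (Or.inr (Or.inl rfl))).mp hξBe
    have h3 : ξC ∈ e := (hiff ξC (Or.inr (Or.inr rfl))).mpr (by rw [hFC]; exact ⟨h1, h2⟩)
    exact ⟨ξC, h3, hFC⟩
  · -- ultra
    intro A hA
    obtain ⟨ξA, hξA, hFA⟩ := hFsurj A hA
    obtain ⟨ξc, hξc, hFc⟩ := hFsurj (Pk κ lam \ A) Set.diff_subset
    obtain ⟨z, hz, _, hiff⟩ := hkey {ξA, ξc}
      (by rintro x (rfl | rfl); exacts [hξA, hξc])
      (hfin _ ((Set.finite_singleton _).insert _))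
    by_cases h : z ∩ Set.Iio lam.ord ∈ A
    · exact Or.inl ⟨ξA, (hiff ξA (Or.inl rfl)).mpr (by rw [hFA]; exact h), hFA⟩
    · refine Or.inr ⟨ξc, (hiff ξc (Or.inr rfl)).mpr ?_, hFc⟩
      rw [hFc]
      exact ⟨hzcap z hz, h⟩
  · -- KComplete
    intro s hsU hs
    have h' : ∀ A : ↥s, ∃ ξ, ξ ∈ e ∧ F ξ = (A : Set (Set Ordinal)) :=
      fun A => hsU A.2
    choose g hge hgF using h'
    obtain ⟨ξs, hξs, hFs⟩ := hFsurj (Pk κ lam ∩ ⋂₀ s) Set.inter_subset_left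
    obtain ⟨z, hz, _, hiff⟩ := hkey (Set.range g ∪ {ξs})
      (by
        rintro x (⟨A, rfl⟩ | rfl)
        · exact heμ _ (hge A)
        · exact hξs)
      (by
        refine lt_of_le_of_lt (Cardinal.mk_union_le _ _) ?_
        refine Cardinal.add_lt_of_lt hℵ (lt_of_le_of_lt Cardinal.mk_range_le hs) ?_
        simpa using lt_of_lt_of_le Cardinal.one_lt_aleph0 hℵ)
    have hzin : z ∩ Set.Iio lam.ord ∈ Pk κ lam ∩ ⋂₀ s := by
      refine ⟨hzcap z hz, fun A hA => ?_⟩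
      have := (hiff (g ⟨A, hA⟩) (Or.inl ⟨⟨A, hA⟩, rfl⟩)).mp (hge ⟨A, hA⟩)
      rw [hgF ⟨A, hA⟩] at this
      exact this
    have h3 : ξs ∈ e := (hiff ξs (Or.inr rfl)).mpr (by rw [hFs]; exact hzin)
    exact ⟨ξs, h3, hFs⟩
  · -- Fine
    intro x hx
    obtain ⟨ξ, hξ, hFξ⟩ := hFsurj {a | a ∈ Pk κ lam ∧ x ∈ a} (fun a ha => ha.1)
    obtain ⟨z, hz, hsubz, hiff⟩ := hkey {ξ, x}
      (by
        rintro y (rfl | rfl)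
        · exact hξ
        · exact lt_of_lt_of_le hx (Cardinal.ord_le_ord.mpr hlamμ))
      (hfin _ ((Set.finite_singleton _).insert _))
    have hxz : x ∈ z ∩ Set.Iio lam.ord := ⟨hsubz (Or.inr rfl), hx⟩
    have h3 : ξ ∈ e := (hiff ξ (Or.inl rfl)).mpr
      (by rw [hFξ]; exact ⟨hzcap z hz, hxz⟩)
    exact ⟨ξ, h3, hFξ⟩

end Aux2
theorem stronglyCompact_iff_lists_have_cofinal_branches (κ : Cardinal.{0})
    (hreg : κ.IsRegular) (hunc : ℵ₀ < κ) :
    IsStronglyCompact κ ↔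
      ∀ lam : Cardinal.{0}, κ ≤ lam →
        ∀ d, IsList κ lam d → ∃ e, IsCofBranch κ lam d e := by
  constructor
  · intro hsc lam hlam d _
    exact forward_aux κ hreg hsc lam hlam d
  · intro H
    exact backward_aux κ hreg H
end

section
/- A regular uncountable cardinal κ is supercompact if and only if for every λ ≥ κ, every P_κλ-list has an ineffable branch. -/
open Cardinal Set

theorem card_iUnion_lt {κ : Cardinal.{0}} (hreg : κ.IsRegular) {ι : Type 1} {f : ι → Set Ordinal.{0}}
    (hι : #ι < Cardinal.lift.{1} κ) (hf : ∀ i, #(f i) < Cardinal.lift.{1} κ) :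
    #(⋃ i, f i) < Cardinal.lift.{1} κ := by
  have hreg' := lift_isRegular hreg
  rcases isEmpty_or_nonempty ι with hE | hN
  · have : (⋃ i, f i) = ∅ := by simp
    rw [this]; simpa using hreg'.pos
  · refine lt_of_le_of_lt (mk_iUnion_le f) ?_
    refine mul_lt_of_lt hreg'.1 hι ?_
    exact Ordinal.iSup_lt_lift (by rwa [Cardinal.lift_id, hreg'.cof_eq]) hf

/-! closure under a binary operation -/

def itOp (u : Set Ordinal.{0} → Set Ordinal.{0} → Set Ordinal.{0}) :
    ℕ → Set (Set Ordinal.{0}) → Set (Set Ordinal.{0})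
  | 0, S => S
  | n+1, S => itOp u n S ∪ Set.image2 u (itOp u n S) (itOp u n S)

def clOp (u : Set Ordinal.{0} → Set Ordinal.{0} → Set Ordinal.{0})
    (S : Set (Set Ordinal.{0})) : Set (Set Ordinal.{0}) :=
  ⋃ n : ULift.{1} ℕ, itOp u n.down S

theorem itOp_succ_subset (u) (n) (S) : itOp u n S ⊆ itOp u (n+1) S := subset_union_left

theorem itOp_le_of_le (u) {m n : ℕ} (h : m ≤ n) (S) : itOp u m S ⊆ itOp u n S := by
  induction n with
  | zero => simp_all
  | succ n ih =>
    rcases Nat.lt_or_ge m (n+1) with h' | h'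
    · exact (ih (Nat.lt_succ_iff.1 h')).trans (itOp_succ_subset u n S)
    · have : m = n + 1 := le_antisymm h h'
      subst this; rfl

theorem subset_clOp (u) (S) : S ⊆ clOp u S :=
  subset_iUnion_of_subset ⟨0⟩ (by rfl)

theorem itOp_mono (u) (n) {S T} (h : S ⊆ T) : itOp u n S ⊆ itOp u n T := by
  induction n with
  | zero => exact h
  | succ n ih => exact union_subset_union ih (image2_subset ih ih)

theorem clOp_mono (u) {S T} (h : S ⊆ T) : clOp u S ⊆ clOp u T :=
  iUnion_mono fun n => itOp_mono u n.down h

theorem itOp_subset_of_closed (u) {D S} (hD : ∀ x ∈ D, ∀ y ∈ D, u x y ∈ D) (hS : S ⊆ D) (n) :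
    itOp u n S ⊆ D := by
  induction n with
  | zero => exact hS
  | succ n ih =>
    refine union_subset ih ?_
    rintro _ ⟨x, hx, y, hy, rfl⟩
    exact hD x (ih hx) y (ih hy)

theorem clOp_subset_of_closed (u) {D S} (hD : ∀ x ∈ D, ∀ y ∈ D, u x y ∈ D) (hS : S ⊆ D) :
    clOp u S ⊆ D :=
  iUnion_subset fun n => itOp_subset_of_closed u hD hS n.down

theorem mem_clOp_iff {u S x} : x ∈ clOp u S ↔ ∃ n : ℕ, x ∈ itOp u n S := by
  rw [clOp, mem_iUnion]
  exact ⟨fun ⟨n, h⟩ => ⟨n.down, h⟩, fun ⟨n, h⟩ => ⟨⟨n⟩, h⟩⟩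

theorem clOp_directed (u) {D S} (hD : ∀ x ∈ D, ∀ y ∈ D, u x y ∈ D ∧ x ⊆ u x y ∧ y ⊆ u x y)
    (hS : S ⊆ D) : ∀ x ∈ clOp u S, ∀ y ∈ clOp u S, ∃ z ∈ clOp u S, x ⊆ z ∧ y ⊆ z := by
  have hDc : ∀ x ∈ D, ∀ y ∈ D, u x y ∈ D := fun x hx y hy => (hD x hx y hy).1
  intro x hx y hy
  obtain ⟨m, hm⟩ := mem_clOp_iff.1 hx
  obtain ⟨n, hn⟩ := mem_clOp_iff.1 hy
  have hm' : x ∈ itOp u (max m n) S := itOp_le_of_le u (le_max_left m n) S hm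
  have hn' : y ∈ itOp u (max m n) S := itOp_le_of_le u (le_max_right m n) S hn
  have hz : u x y ∈ itOp u (max m n + 1) S := subset_union_right (mem_image2_of_mem hm' hn')
  have hxD : x ∈ D := itOp_subset_of_closed u hDc hS _ hm'
  have hyD : y ∈ D := itOp_subset_of_closed u hDc hS _ hn'
  exact ⟨u x y, mem_clOp_iff.2 ⟨_, hz⟩, (hD x hxD y hyD).2⟩

theorem mk_itOp_le (u) (S : Set (Set Ordinal.{0})) (n) :
    #(itOp u n S) ≤ max ℵ₀ #S := by
  induction n with
  | zero => exact le_max_right _ _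
  | succ n ih =>
    have h2 : #(Set.image2 u (itOp u n S) (itOp u n S)) ≤ max ℵ₀ #S := by
      refine le_trans (Cardinal.mk_image2_le) ?_
      calc #(itOp u n S) * #(itOp u n S) ≤ max ℵ₀ #S * max ℵ₀ #S := by
            exact mul_le_mul' ih ih
        _ = max ℵ₀ #S := mul_eq_self (le_max_left _ _)
    refine le_trans (mk_union_le _ _) ?_
    calc #(itOp u n S) + #(Set.image2 u (itOp u n S) (itOp u n S))
        ≤ max ℵ₀ #S + max ℵ₀ #S := add_le_add ih h2
      _ = max ℵ₀ #S := add_eq_self (le_max_left _ _)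

theorem mk_clOp_le (u) (S : Set (Set Ordinal.{0})) : #(clOp u S) ≤ max ℵ₀ #S := by
  refine le_trans (mk_iUnion_le fun n : ULift.{1} ℕ => itOp u n.down S) ?_
  have h1 : #(ULift.{1} ℕ) = ℵ₀ := by simp
  rw [h1]
  have h2 : (⨆ n : ULift.{1} ℕ, #(itOp u n.down S)) ≤ max ℵ₀ #S :=
    ciSup_le' fun n => mk_itOp_le u S n.down
  calc ℵ₀ * (⨆ n : ULift.{1} ℕ, #(itOp u n.down S)) ≤ ℵ₀ * max ℵ₀ #S :=
        mul_le_mul' le_rfl h2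
    _ ≤ max ℵ₀ #S * max ℵ₀ #S := mul_le_mul' (le_max_left _ _) le_rfl
    _ = max ℵ₀ #S := mul_eq_self (le_max_left _ _)

/-! directed unions of size `< κ` stay in chain-closed families -/

theorem directed_sUnion_mem {κ : Cardinal.{0}} (hreg : κ.IsRegular) (hunc : ℵ₀ < κ)
    {C : Set (Set Ordinal.{0})}
    (hC : ∀ δ : Ordinal.{0}, 0 < δ → δ.card < κ →
      ∀ f : Ordinal.{0} → Set Ordinal.{0}, (∀ β < δ, f β ∈ C) →
        (∀ β γ, β ≤ γ → γ < δ → f β ⊆ f γ) → (⋃ β ∈ Set.Iio δ, f β) ∈ C) :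
    ∀ (μ : Cardinal.{1}) (D : Set (Set Ordinal.{0})), #D = μ → D.Nonempty → D ⊆ C →
      (∀ x ∈ D, ∀ y ∈ D, ∃ z ∈ D, x ⊆ z ∧ y ⊆ z) → μ < Cardinal.lift.{1} κ →
      ⋃₀ D ∈ C := by
  intro μ
  induction μ using WellFoundedLT.induction with
  | ind μ IH =>
  intro D hmk hne hsub hdir hlt
  classical
  -- upper bound choice function
  have hu : ∀ x y : Set Ordinal.{0}, ∃ z, x ∈ D → y ∈ D → z ∈ D ∧ x ⊆ z ∧ y ⊆ z := by
    intro x y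
    by_cases hx : x ∈ D ∧ y ∈ D
    · obtain ⟨z, hz, h1, h2⟩ := hdir x hx.1 y hx.2
      exact ⟨z, fun _ _ => ⟨hz, h1, h2⟩⟩
    · exact ⟨∅, fun h1 h2 => absurd ⟨h1, h2⟩ hx⟩
  set u : Set Ordinal.{0} → Set Ordinal.{0} → Set Ordinal.{0} :=
    fun x y => (hu x y).choose with hu_def
  have huD : ∀ x ∈ D, ∀ y ∈ D, u x y ∈ D ∧ x ⊆ u x y ∧ y ⊆ u x y :=
    fun x hx y hy => (hu x y).choose_spec hx hy
  by_cases hcnt : μ ≤ ℵ₀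
  -- countable case: build an ω-chain
  · have hcount : D.Countable := by
      rw [← Set.countable_coe_iff, ← Cardinal.mk_le_aleph0_iff, hmk]; exact hcnt
    obtain ⟨h, hrange⟩ := Set.Countable.exists_eq_range hcount hne
    have hhD : ∀ n, h n ∈ D := fun n => by rw [hrange]; exact mem_range_self n
    -- the chain
    let c : ℕ → Set Ordinal.{0} := fun n => Nat.rec (h 0) (fun n cn => u cn (h (n+1))) n
    have hc0 : c 0 = h 0 := rfl
    have hcs : ∀ n, c (n+1) = u (c n) (h (n+1)) := fun n => rfl
    have hcD : ∀ n, c n ∈ D := by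
      intro n; induction n with
      | zero => exact hhD 0
      | succ n ih => rw [hcs]; exact (huD _ ih _ (hhD (n+1))).1
    have hmono : ∀ m n : ℕ, m ≤ n → c m ⊆ c n := by
      intro m n hmn
      induction n with
      | zero => simp_all
      | succ n ih =>
        rcases Nat.lt_or_ge m (n+1) with h' | h'
        · refine (ih (Nat.lt_succ_iff.1 h')).trans ?_
          rw [hcs]; exact (huD _ (hcD n) _ (hhD (n+1))).2.1
        · have : m = n + 1 := le_antisymm hmn h'
          subst this; rfl
    have hcover : ∀ n, h n ⊆ c n := by
      intro n
      cases n with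
      | zero => rfl
      | succ n => rw [hcs]; exact (huD _ (hcD n) _ (hhD (n+1))).2.2
    set f : Ordinal.{0} → Set Ordinal.{0} :=
      fun β => if hb : ∃ n : ℕ, β = (n : Ordinal) then c hb.choose else ∅ with hf_def
    have hfn : ∀ n : ℕ, f (n : Ordinal) = c n := by
      intro n
      have hb : ∃ m : ℕ, (n : Ordinal) = (m : Ordinal) := ⟨n, rfl⟩
      have := hb.choose_spec
      have hn : hb.choose = n := by
        have := this.symm
        exact_mod_cast this
      simp only [hf_def, dif_pos hb]
      rw [hn]
    have key : (⋃ β ∈ Set.Iio Ordinal.omega0, f β) ∈ C := by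
      refine hC Ordinal.omega0 Ordinal.omega0_pos (by rw [Ordinal.card_omega0]; exact hunc) f ?_ ?_
      · intro β hβ
        obtain ⟨n, rfl⟩ := Ordinal.lt_omega0.1 hβ
        rw [hfn]; exact hsub (hcD n)
      · intro β γ hbg hγ
        obtain ⟨n, rfl⟩ := Ordinal.lt_omega0.1 hγ
        obtain ⟨m, rfl⟩ := Ordinal.lt_omega0.1 (lt_of_le_of_lt hbg hγ)
        rw [hfn, hfn]
        exact hmono m n (by exact_mod_cast hbg)
    have heq : (⋃ β ∈ Set.Iio Ordinal.omega0, f β) = ⋃₀ D := by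
      apply Set.Subset.antisymm
      · refine iUnion₂_subset fun β hβ => ?_
        obtain ⟨n, rfl⟩ := Ordinal.lt_omega0.1 hβ
        rw [hfn]
        exact fun x hx => ⟨c n, hcD n, hx⟩
      · rintro x ⟨d, hd, hx⟩
        have : ∃ n, d = h n := by
          rw [hrange] at hd; obtain ⟨n, rfl⟩ := hd; exact ⟨n, rfl⟩
        obtain ⟨n, rfl⟩ := this
        refine mem_biUnion (Ordinal.nat_lt_omega0 n) ?_
        rw [hfn]; exact hcover n hx
    rwa [heq] at key
  -- uncountable case
  · push_neg at hcnt
    obtain ⟨μ₀, hμ₀κ, hμ₀⟩ := Cardinal.lt_lift_iff.1 hlt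
    have hμ₀unc : ℵ₀ < μ₀ := by
      rw [← Cardinal.lift_lt.{_,1}, Cardinal.lift_aleph0, hμ₀]; exact hcnt
    set ν : Ordinal.{0} := μ₀.ord with hν_def
    have hνlim : Order.IsSuccLimit ν := Cardinal.isSuccLimit_ord hμ₀unc.le
    have hmkIio : #(Set.Iio ν) = μ := by
      rw [Ordinal.mk_Iio_ordinal, Cardinal.card_ord, hμ₀]
    obtain ⟨h⟩ : Nonempty ((Set.Iio ν) ≃ D) := Cardinal.eq.1 (hmkIio.trans hmk.symm)
    -- generators and chain entries
    set gen : (Set.Iio ν) → Set (Set Ordinal.{0}) :=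
      fun ξ => (fun η : (Set.Iio ν) => (h η : Set Ordinal.{0})) '' {η | (η : Ordinal) ≤ (ξ : Ordinal)}
      with hgen_def
    have hgen_sub : ∀ ξ, gen ξ ⊆ D := by
      rintro ξ _ ⟨η, _, rfl⟩; exact (h η).2
    have hgen_ne : ∀ ξ, (gen ξ).Nonempty := fun ξ => ⟨h ξ, ⟨ξ, show ((ξ:Ordinal) ≤ (ξ:Ordinal)) from le_rfl, rfl⟩⟩
    have hgen_mono : ∀ ξ ζ : (Set.Iio ν), (ξ : Ordinal) ≤ ζ → gen ξ ⊆ gen ζ := by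
      rintro ξ ζ hle _ ⟨η, hη, rfl⟩; exact ⟨η, le_trans hη hle, rfl⟩
    have hgen_card : ∀ ξ, #(gen ξ) < μ := by
      intro ξ
      refine lt_of_le_of_lt (mk_image_le) ?_
      have hemb : #{η : (Set.Iio ν) | (η : Ordinal) ≤ (ξ : Ordinal)} ≤ #(Set.Iio (Order.succ (ξ : Ordinal))) := by
        refine Cardinal.mk_le_of_injective (f := fun η =>
          ⟨((η : Set.Iio ν) : Ordinal), Set.mem_Iio.2 (Order.lt_succ_iff.2 η.2)⟩) ?_
        intro a b hab
        simp only [Subtype.mk.injEq] at hab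
        exact Subtype.ext (Subtype.ext hab)
      refine lt_of_le_of_lt hemb ?_
      rw [Ordinal.mk_Iio_ordinal, ← hμ₀]
      rw [Cardinal.lift_lt]
      rw [← Cardinal.lt_ord, ← hν_def]
      exact hνlim.succ_lt ξ.2
    -- each chain entry is in C by the inductive hypothesis
    have hchain_mem : ∀ ξ : (Set.Iio ν), ⋃₀ (clOp u (gen ξ)) ∈ C := by
      intro ξ
      have hclsub : clOp u (gen ξ) ⊆ D :=
        clOp_subset_of_closed u (fun x hx y hy => (huD x hx y hy).1) (hgen_sub ξ)
      have hclcard : #(clOp u (gen ξ)) < μ := by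
        refine lt_of_le_of_lt (mk_clOp_le u _) ?_
        exact max_lt hcnt (hgen_card ξ)
      refine IH _ hclcard _ rfl ((hgen_ne ξ).mono (subset_clOp u _)) (hclsub.trans hsub)
        (clOp_directed u huD (hgen_sub ξ)) (hclcard.trans hlt)
    set f : Ordinal.{0} → Set Ordinal.{0} :=
      fun β => if hb : β < ν then ⋃₀ (clOp u (gen ⟨β, hb⟩)) else ∅ with hf_def
    have hfβ : ∀ (β) (hb : β < ν), f β = ⋃₀ (clOp u (gen ⟨β, hb⟩)) := by
      intro β hb; simp only [hf_def, dif_pos hb]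
    have key : (⋃ β ∈ Set.Iio ν, f β) ∈ C := by
      refine hC ν hνlim.pos (by rw [hν_def, Cardinal.card_ord]; exact hμ₀κ) f ?_ ?_
      · intro β hβ; rw [hfβ β hβ]; exact hchain_mem _
      · intro β γ hbg hγ
        rw [hfβ β (lt_of_le_of_lt hbg hγ), hfβ γ hγ]
        exact sUnion_mono (clOp_mono u (hgen_mono _ _ hbg))
    have heq : (⋃ β ∈ Set.Iio ν, f β) = ⋃₀ D := by
      apply Set.Subset.antisymm
      · refine iUnion₂_subset fun β hβ => ?_
        rw [hfβ β hβ]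
        refine sUnion_subset fun x hx => ?_
        have hxD : x ∈ D :=
          clOp_subset_of_closed u (fun a ha b hb => (huD a ha b hb).1) (hgen_sub _) hx
        exact fun y hy => ⟨x, hxD, hy⟩
      · rintro x ⟨d, hd, hx⟩
        set η : (Set.Iio ν) := h.symm ⟨d, hd⟩ with hη_def
        have hdgen : d ∈ gen η := by
          refine ⟨η, show ((η:Ordinal) ≤ (η:Ordinal)) from le_rfl, ?_⟩
          show ((h (h.symm ⟨d, hd⟩) : ↑D) : Set Ordinal.{0}) = d
          rw [Equiv.apply_symm_apply]
        refine mem_biUnion η.2 ?_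
        rw [hfβ _ η.2]
        exact ⟨d, subset_clOp u _ hdgen, hx⟩
    rwa [heq] at key

/-- `P_κ λ`: the collection of subsets of (the set of ordinals below) `λ` of size `< κ`. -/
theorem aleph0_le_lift_k {κ : Cardinal.{0}} (hunc : ℵ₀ < κ) : ℵ₀ ≤ Cardinal.lift.{1} κ := by
  rw [← lift_aleph0.{1,0}]; exact (lift_le.2 hunc.le)

theorem aleph0_lt_lift_k {κ : Cardinal.{0}} (hunc : ℵ₀ < κ) : ℵ₀ < Cardinal.lift.{1} κ := by
  rw [← lift_aleph0.{1,0}]; exact (lift_lt.2 hunc)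

theorem finset_inter_mem_Pk {κ lam : Cardinal.{0}} (hunc : ℵ₀ < κ) (s : Finset Ordinal.{0}) :
    ((↑s : Set Ordinal.{0}) ∩ Set.Iio lam.ord) ∈ Pk κ lam := by
  constructor
  · exact fun α hα => hα.2
  · refine lt_of_lt_of_le ?_ (aleph0_le_lift_k hunc)
    exact ((s.finite_toSet.inter_of_left _)).lt_aleph0

theorem biUnion_lt_card {κ : Cardinal.{0}} (hreg : κ.IsRegular) {δ : Ordinal.{0}}
    (hδ : δ.card < κ) {f : Ordinal.{0} → Set Ordinal.{0}}
    (hf : ∀ β < δ, #(f β) < Cardinal.lift.{1} κ) :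
    #(⋃ β ∈ Set.Iio δ, f β) < Cardinal.lift.{1} κ := by
  have : (⋃ β ∈ Set.Iio δ, f β) = ⋃ i : (Set.Iio δ), f i := by
    rw [Set.biUnion_eq_iUnion]
  rw [this]
  refine card_iUnion_lt hreg ?_ fun i => hf i i.2
  rw [Ordinal.mk_Iio_ordinal]
  exact lift_lt.2 hδ

theorem Pk_chain_closed {κ lam : Cardinal.{0}} (hreg : κ.IsRegular) :
    ∀ δ : Ordinal.{0}, 0 < δ → δ.card < κ →
      ∀ f : Ordinal.{0} → Set Ordinal.{0}, (∀ β < δ, f β ∈ Pk κ lam) →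
        (∀ β γ, β ≤ γ → γ < δ → f β ⊆ f γ) →
        (⋃ β ∈ Set.Iio δ, f β) ∈ Pk κ lam := by
  intro δ h0 hδ f hf _
  constructor
  · intro α hα
    simp only [mem_iUnion] at hα
    obtain ⟨β, hβ, hαβ⟩ := hα
    exact (hf β hβ).1 α hαβ
  · exact biUnion_lt_card hreg hδ fun β hβ => (hf β hβ).2

/-- Menas-style lemma: every club contains the closure points of a finset-indexed function. -/
theorem menas {κ lam : Cardinal.{0}} (hreg : κ.IsRegular) (hunc : ℵ₀ < κ)
    {C : Set (Set Ordinal.{0})} (hclub : IsClubIn κ (Pk κ lam) C) :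
    ∃ G : Finset Ordinal.{0} → Set Ordinal.{0},
      (∀ s, G s ∈ C) ∧ (∀ s : Finset Ordinal.{0}, (↑s : Set Ordinal.{0}) ∩ Set.Iio lam.ord ⊆ G s) ∧
      (∀ s t : Finset Ordinal.{0}, s ⊆ t → G s ⊆ G t) ∧
      (∀ a ∈ Pk κ lam, (∀ s : Finset Ordinal.{0}, ↑s ⊆ a → G s ⊆ a) → a ∈ C) := by
  classical
  obtain ⟨hCsub, hcof, hclosed⟩ := hclub
  have hnext : ∀ b : Set Ordinal.{0}, ∃ c, b ∈ Pk κ lam → (c ∈ C ∧ b ⊆ c) := by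
    intro b
    by_cases hb : b ∈ Pk κ lam
    · obtain ⟨c, hc1, hc2⟩ := hcof b hb
      exact ⟨c, fun _ => ⟨hc1, hc2⟩⟩
    · exact ⟨∅, fun h => absurd h hb⟩
  set next : Set Ordinal.{0} → Set Ordinal.{0} := fun b => (hnext b).choose with hnext_def
  have hnextP : ∀ b ∈ Pk κ lam, next b ∈ C ∧ b ⊆ next b := fun b hb => (hnext b).choose_spec hb
  -- iterated function
  set F : ℕ → Finset Ordinal.{0} → Set Ordinal.{0} := fun n => Nat.rec
    (fun s => next ((↑s : Set Ordinal.{0}) ∩ Set.Iio lam.ord))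
    (fun _ Fn s => next (((↑s : Set Ordinal.{0}) ∩ Set.Iio lam.ord) ∪ ⋃ t ∈ s.powerset, Fn t)) n
    with hF_def
  have hF0 : ∀ s, F 0 s = next ((↑s : Set Ordinal.{0}) ∩ Set.Iio lam.ord) := fun _ => rfl
  have hFs : ∀ n s, F (n+1) s =
      next (((↑s : Set Ordinal.{0}) ∩ Set.Iio lam.ord) ∪ ⋃ t ∈ s.powerset, F n t) :=
    fun _ _ => rfl
  -- F-values are in C and contain the generators
  have hFC : ∀ n s, F n s ∈ C ∧ ((↑s : Set Ordinal.{0}) ∩ Set.Iio lam.ord) ⊆ F n s := by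
    intro n
    induction n with
    | zero =>
      intro s
      have := hnextP _ (finset_inter_mem_Pk (lam := lam) hunc s)
      exact ⟨this.1, this.2⟩
    | succ n ih =>
      intro s
      have harg : (((↑s : Set Ordinal.{0}) ∩ Set.Iio lam.ord) ∪ ⋃ t ∈ s.powerset, F n t) ∈
          Pk κ lam := by
        constructor
        · rintro α (hα | hα)
          · exact hα.2
          · simp only [mem_iUnion] at hα
            obtain ⟨t, ht, hαt⟩ := hα
            exact (hCsub (ih t).1).1 α hαt
        · refine lt_of_le_of_lt (mk_union_le _ _) ?_
          refine Cardinal.add_lt_of_lt (aleph0_le_lift_k hunc)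
            (finset_inter_mem_Pk (lam := lam) hunc s).2 ?_
          have heq : (⋃ t ∈ s.powerset, F n t) = ⋃ t : (↑(s.powerset) : Set (Finset Ordinal.{0})), F n (↑t : Finset Ordinal.{0}) := by
            ext x; simp
          rw [heq]
          refine card_iUnion_lt hreg ?_ fun t => (hCsub (ih t).1).2
          refine lt_of_lt_of_le ?_ (aleph0_le_lift_k hunc)
          exact (s.powerset.finite_toSet).lt_aleph0
      have := hnextP _ harg
      exact ⟨this.1, fun x hx => this.2 (Or.inl hx)⟩
  have hFP : ∀ n s, F n s ∈ Pk κ lam := fun n s => hCsub (hFC n s).1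
  -- monotone in n, and powerset subsets
  have hargPk : ∀ (n : ℕ) (s : Finset Ordinal.{0}),
      (((↑s : Set Ordinal.{0}) ∩ Set.Iio lam.ord) ∪ ⋃ t ∈ s.powerset, F n t) ∈ Pk κ lam := by
    intro n s
    constructor
    · rintro α (hα | hα)
      · exact hα.2
      · simp only [mem_iUnion] at hα
        obtain ⟨t', ht', hαt⟩ := hα
        exact (hFP n t').1 α hαt
    · refine lt_of_le_of_lt (mk_union_le _ _) ?_
      refine Cardinal.add_lt_of_lt (aleph0_le_lift_k hunc)
        (finset_inter_mem_Pk (lam := lam) hunc s).2 ?_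
      have heq : (⋃ t' ∈ s.powerset, F n t') = ⋃ t' : (↑(s.powerset) : Set (Finset Ordinal.{0})), F n (↑t' : Finset Ordinal.{0}) := by
        ext x; simp
      rw [heq]
      refine card_iUnion_lt hreg ?_ fun t' => (hFP n t').2
      refine lt_of_lt_of_le ?_ (aleph0_le_lift_k hunc)
      exact (s.powerset.finite_toSet).lt_aleph0
  have hsubF : ∀ n s t, t ⊆ s → F n t ⊆ F (n+1) s := by
    intro n s t hts
    rw [hFs]
    refine subset_trans ?_ (hnextP _ (hargPk n s)).2
    intro x hx
    exact Or.inr (mem_biUnion (Finset.mem_powerset.2 hts) hx)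
  have hFmono : ∀ m n s, m ≤ n → F m s ⊆ F n s := by
    intro m n s hmn
    induction n with
    | zero => simp_all
    | succ n ih =>
      rcases Nat.lt_or_ge m (n+1) with h' | h'
      · exact (ih (Nat.lt_succ_iff.1 h')).trans (hsubF n s s (subset_refl s))
      · have : m = n + 1 := le_antisymm hmn h'
        subst this; rfl
  set G : Finset Ordinal.{0} → Set Ordinal.{0} := fun s => F s.card s with hG_def
  have hGmono : ∀ s t : Finset Ordinal.{0}, s ⊆ t → G s ⊆ G t := by
    intro s t hst
    by_cases heq : s = t
    · subst heq; rfl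
    · have hlt : s.card < t.card := Finset.card_lt_card (lt_of_le_of_ne hst heq)
      calc G s = F s.card s := rfl
        _ ⊆ F (s.card + 1) t := hsubF s.card t s hst
        _ ⊆ F t.card t := hFmono _ _ _ hlt
  refine ⟨G, fun s => (hFC s.card s).1, fun s => (hFC s.card s).2, hGmono, ?_⟩
  -- closure points lie in C
  intro a ha hclosure
  set D : Set (Set Ordinal.{0}) := {x | ∃ s : Finset Ordinal.{0}, ↑s ⊆ a ∧ x = G s} with hD_def
  have hDne : D.Nonempty := ⟨G ∅, ∅, by simp, rfl⟩
  have hDsub : D ⊆ C := by rintro _ ⟨s, _, rfl⟩; exact (hFC s.card s).1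
  have hDdir : ∀ x ∈ D, ∀ y ∈ D, ∃ z ∈ D, x ⊆ z ∧ y ⊆ z := by
    rintro _ ⟨s, hs, rfl⟩ _ ⟨t, ht, rfl⟩
    refine ⟨G (s ∪ t), ⟨s ∪ t, ?_, rfl⟩, hGmono _ _ Finset.subset_union_left,
      hGmono _ _ Finset.subset_union_right⟩
    rw [Finset.coe_union]
    exact union_subset hs ht
  have hDcard : #D < Cardinal.lift.{1} κ := by
    have hsurj : D ⊆ Set.range (fun s : Finset (↥a) => G (s.image (fun y : ↥a => (y : Ordinal.{0})))) := by
      rintro _ ⟨s, hs, rfl⟩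
      have hinj : Function.Injective (fun x : {x // x ∈ s} => (⟨x.1, hs x.2⟩ : ↥a)) := by
        intro x y hxy
        simp only [Subtype.mk.injEq] at hxy
        exact Subtype.ext hxy
      refine ⟨s.attach.map ⟨_, hinj⟩, ?_⟩
      have himg : (s.attach.map ⟨_, hinj⟩).image (fun y : ↥a => (y : Ordinal.{0})) = s := by
        ext x
        constructor
        · intro hx
          rw [Finset.mem_image] at hx
          obtain ⟨y, hy, rfl⟩ := hx
          rw [Finset.mem_map] at hy
          obtain ⟨z, hz, rfl⟩ := hy
          exact z.2
        · intro hx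
          rw [Finset.mem_image]
          exact ⟨⟨x, hs hx⟩, Finset.mem_map.2 ⟨⟨x, hx⟩, Finset.mem_attach _ _, rfl⟩, rfl⟩
      exact congrArg G himg
    refine lt_of_le_of_lt (Cardinal.mk_le_mk_of_subset hsurj) ?_
    refine lt_of_le_of_lt Cardinal.mk_range_le ?_
    rcases Set.finite_or_infinite a with hfin | hinf
    · haveI : Fintype (↥a) := hfin.fintype
      haveI : Finite (Finset (↥a)) := inferInstance
      exact lt_of_lt_of_le (Cardinal.lt_aleph0_of_finite _) (aleph0_le_lift_k hunc)
    · haveI : Infinite (↥a) := hinf.to_subtype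
      rw [Cardinal.mk_finset_of_infinite]
      exact ha.2
  have hDunion : ⋃₀ D = a := by
    apply Set.Subset.antisymm
    · rintro x ⟨_, ⟨s, hs, rfl⟩, hx⟩
      exact hclosure s hs hx
    · intro x hx
      refine ⟨G {x}, ⟨{x}, by simpa using hx, rfl⟩, ?_⟩
      have hmem : x ∈ (↑({x} : Finset Ordinal.{0}) : Set Ordinal.{0}) ∩ Set.Iio lam.ord :=
        ⟨by simp, ha.1 x hx⟩
      exact (hFC ({x} : Finset Ordinal.{0}).card {x}).2 hmem
  have := directed_sUnion_mem hreg hunc hclosed (#D) D rfl hDne hDsub hDdir hDcard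
  rwa [hDunion] at this

section UF
variable {κ lam : Cardinal.{0}} {U : Set (Set (Set Ordinal.{0}))}

theorem fin_closure_mem_U (hreg : κ.IsRegular) (hunc : ℵ₀ < κ)
    (hU : IsUFOn (Pk κ lam) U) (hK : KComplete κ (Pk κ lam) U)
    (hFine : Fine κ lam U) (hN : NormalUF κ lam U) :
    ∀ (n : ℕ) (H : Finset Ordinal.{0} → Set Ordinal.{0}),
      (∀ s, (∀ α ∈ H s, α < lam.ord) ∧ #(H s) < Cardinal.lift.{1} κ) →
      {a ∈ Pk κ lam | ∀ s : Finset Ordinal.{0}, s.card ≤ n → ↑s ⊆ a → H s ⊆ a} ∈ U := by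
  classical
  obtain ⟨hUsub, hUX, hUe, hUup, hUint, hUor⟩ := hU
  intro n
  induction n with
  | zero =>
    intro H hH
    set fam : Set (Set (Set Ordinal.{0})) :=
      (fun y => {a ∈ Pk κ lam | y ∈ a}) '' (H ∅) with hfam_def
    have hfamU : fam ⊆ U := by
      rintro _ ⟨y, hy, rfl⟩
      exact hFine y ((hH ∅).1 y hy)
    have hfamcard : #fam < Cardinal.lift.{1} κ :=
      lt_of_le_of_lt mk_image_le (hH ∅).2
    have hbig := hK fam hfamU hfamcard
    refine hUup _ hbig _ ?_ (fun a ha => ha.1)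
    rintro a ⟨haP, haI⟩
    refine ⟨haP, fun s hs hsub => ?_⟩
    have hs0 : s = ∅ := Finset.card_eq_zero.1 (Nat.le_zero.1 hs)
    subst hs0
    intro y hy
    exact (haI _ ⟨y, hy, rfl⟩).2
  | succ n ih =>
    intro H hH
    set A : Ordinal.{0} → Set (Set Ordinal.{0}) := fun x =>
      if x < lam.ord then
        {a ∈ Pk κ lam | ∀ s : Finset Ordinal.{0}, s.card ≤ n → ↑s ⊆ a → H (insert x s) ⊆ a}
      else Pk κ lam with hA_def
    have hAU : ∀ x < lam.ord, A x ∈ U := by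
      intro x hx
      simp only [hA_def, if_pos hx]
      exact ih (fun s => H (insert x s)) (fun s => hH _)
    have hNmem := hN A hAU
    have hTn := ih H (fun s => hH s)
    have hint := hUint _ hNmem _ hTn
    refine hUup _ hint _ ?_ (fun a ha => ha.1)
    rintro a ⟨⟨haP, haA⟩, _, haT⟩
    refine ⟨haP, fun s hs hsub => ?_⟩
    rcases s.eq_empty_or_nonempty with rfl | ⟨x, hx⟩
    · exact haT ∅ (Nat.zero_le n) (by simp)
    · have hxa : x ∈ a := hsub hx
      have hxlam : x < lam.ord := haP.1 x hxa
      have := haA x hxa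
      rw [hA_def] at this
      simp only [if_pos hxlam] at this
      have herase := this.2 (s.erase x) ?_ ?_
      · rwa [Finset.insert_erase hx] at herase
      · have := Finset.card_erase_of_mem hx
        omega
      · exact fun y hy => hsub (Finset.erase_subset x s hy)

theorem closure_mem_U (hreg : κ.IsRegular) (hunc : ℵ₀ < κ)
    (hU : IsUFOn (Pk κ lam) U) (hK : KComplete κ (Pk κ lam) U)
    (hFine : Fine κ lam U) (hN : NormalUF κ lam U)
    (G : Finset Ordinal.{0} → Set Ordinal.{0})
    (hG : ∀ s, (∀ α ∈ G s, α < lam.ord) ∧ #(G s) < Cardinal.lift.{1} κ) :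
    {a ∈ Pk κ lam | ∀ s : Finset Ordinal.{0}, ↑s ⊆ a → G s ⊆ a} ∈ U := by
  obtain ⟨hUsub, hUX, hUe, hUup, hUint, hUor⟩ := hU
  set T : ℕ → Set (Set Ordinal.{0}) := fun n =>
    {a ∈ Pk κ lam | ∀ s : Finset Ordinal.{0}, s.card ≤ n → ↑s ⊆ a → G s ⊆ a} with hT_def
  have hTU : ∀ n, T n ∈ U := fun n =>
    fin_closure_mem_U hreg hunc ⟨hUsub, hUX, hUe, hUup, hUint, hUor⟩ hK hFine hN n G hG
  have hfamU : Set.range T ⊆ U := by rintro _ ⟨n, rfl⟩; exact hTU n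
  have hfamcard : #(Set.range T) < Cardinal.lift.{1} κ := by
    refine lt_of_le_of_lt ?_ (aleph0_lt_lift_k hunc)
    have := Cardinal.mk_range_le_lift (f := T)
    rwa [Cardinal.lift_id'.{0,1}, Cardinal.mk_nat, Cardinal.lift_aleph0] at this
  have hbig := hK _ hfamU hfamcard
  refine hUup _ hbig _ ?_ (fun a ha => ha.1)
  rintro a ⟨haP, haI⟩
  refine ⟨haP, fun s hsub => ?_⟩
  exact (haI _ ⟨s.card, rfl⟩).2 s le_rfl hsub

end UF

theorem forward_dir {κ : Cardinal.{0}} (hreg : κ.IsRegular) (hunc : ℵ₀ < κ)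
    (hsc : IsSupercompact κ) :
    ∀ lam : Cardinal.{0}, κ ≤ lam →
      ∀ d, IsList κ lam d → ∃ e, IsIneffBranch κ lam d e := by
  classical
  intro lam hlam d hd
  obtain ⟨U, hU, hK, hFine, hN⟩ := hsc lam hlam
  obtain ⟨hUsub, hUX, hUe, hUup, hUint, hUor⟩ := hU
  set e : Set Ordinal.{0} := {x | x < lam.ord ∧ {a ∈ Pk κ lam | x ∈ d a} ∈ U} with he_def
  set B : Set (Set Ordinal.{0}) := {a ∈ Pk κ lam | e ∩ a = d a} with hB_def
  -- B ∈ U via normality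
  set A : Ordinal.{0} → Set (Set Ordinal.{0}) := fun x =>
    if x < lam.ord then
      (if {a ∈ Pk κ lam | x ∈ d a} ∈ U then {a ∈ Pk κ lam | x ∈ d a}
       else Pk κ lam \ {a ∈ Pk κ lam | x ∈ d a})
    else Pk κ lam with hA_def
  have hAU : ∀ x < lam.ord, A x ∈ U := by
    intro x hx
    simp only [hA_def, if_pos hx]
    by_cases h2 : {a ∈ Pk κ lam | x ∈ d a} ∈ U
    · rwa [if_pos h2]
    · rw [if_neg h2]
      rcases hUor {a ∈ Pk κ lam | x ∈ d a} (fun a ha => ha.1) with h | h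
      · exact absurd h h2
      · exact h
  have hNmem := hN A hAU
  have hBU : B ∈ U := by
    refine hUup _ hNmem _ ?_ (fun a ha => ha.1)
    rintro a ⟨haP, haA⟩
    refine ⟨haP, ?_⟩
    ext x
    constructor
    · rintro ⟨⟨hxlam, hxU⟩, hxa⟩
      have := haA x hxa
      rw [hA_def] at this
      simp only [if_pos hxlam, if_pos hxU] at this
      exact this.2
    · intro hxd
      have hxa : x ∈ a := hd a haP hxd
      have hxlam : x < lam.ord := haP.1 x hxa
      have := haA x hxa
      rw [hA_def] at this
      simp only [if_pos hxlam] at this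
      by_cases h2 : {a ∈ Pk κ lam | x ∈ d a} ∈ U
      · exact ⟨⟨hxlam, h2⟩, hxa⟩
      · rw [if_neg h2] at this
        exact absurd ⟨haP, hxd⟩ this.2
  refine ⟨e, fun α hα => hα.1, fun a ha => ha.1, ?_⟩
  intro C hC
  obtain ⟨G, hGC, hGgen, hGmono, hGcl⟩ := menas hreg hunc hC
  have hGbounds : ∀ s, (∀ α ∈ G s, α < lam.ord) ∧ #(G s) < Cardinal.lift.{1} κ := by
    intro s
    have := hC.1 (hGC s)
    exact ⟨this.1, this.2⟩
  have hCLU := closure_mem_U hreg hunc ⟨hUsub, hUX, hUe, hUup, hUint, hUor⟩ hK hFine hN G hGbounds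
  have hBCL := hUint _ hBU _ hCLU
  have hne : (B ∩ {a ∈ Pk κ lam | ∀ s : Finset Ordinal.{0}, ↑s ⊆ a → G s ⊆ a}).Nonempty := by
    rcases Set.eq_empty_or_nonempty
      (B ∩ {a ∈ Pk κ lam | ∀ s : Finset Ordinal.{0}, ↑s ⊆ a → G s ⊆ a}) with hemp | hne
    · rw [hemp] at hBCL; exact absurd hBCL hUe
    · exact hne
  obtain ⟨a, haB, haCL⟩ := hne
  exact ⟨a, haB, hGcl a haCL.1 haCL.2⟩

/-! Reverse direction -/

theorem inter_Iio_mem_Pk {κ lam lam' : Cardinal.{0}} {a : Set Ordinal.{0}}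
    (ha : a ∈ Pk κ lam') : a ∩ Set.Iio lam.ord ∈ Pk κ lam := by
  refine ⟨fun α hα => hα.2, ?_⟩
  exact lt_of_le_of_lt (Cardinal.mk_le_mk_of_subset inter_subset_left) ha.2

theorem closure_club {κ lam lam' : Cardinal.{0}} (hreg : κ.IsRegular) (hunc : ℵ₀ < κ)
    (b : Set Ordinal.{0}) (hb1 : ∀ β ∈ b, β < lam'.ord) (hb2 : #b < Cardinal.lift.{1} κ)
    (g : Ordinal.{0} → Ordinal.{0}) (hg : ∀ x, x < lam.ord → g x < lam'.ord) :
    IsClubIn κ (Pk κ lam') {a ∈ Pk κ lam' | b ⊆ a ∧ ∀ x ∈ a, x < lam.ord → g x ∈ a} := by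
  refine ⟨fun a ha => ha.1, ?_, ?_⟩
  · -- cofinal
    intro a ha
    set w : ℕ → Set Ordinal.{0} := fun n =>
      Nat.rec (a ∪ b) (fun _ wn => wn ∪ (fun x => g x) '' (wn ∩ Set.Iio lam.ord)) n with hw_def
    have hw0 : w 0 = a ∪ b := rfl
    have hws : ∀ n, w (n+1) = w n ∪ (fun x => g x) '' (w n ∩ Set.Iio lam.ord) := fun _ => rfl
    have hwP : ∀ n, w n ∈ Pk κ lam' := by
      intro n
      induction n with
      | zero =>
        refine ⟨fun α hα => ?_, ?_⟩
        · rcases hα with h | h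
          · exact ha.1 α h
          · exact hb1 α h
        · exact lt_of_le_of_lt (mk_union_le _ _)
            (Cardinal.add_lt_of_lt (aleph0_le_lift_k hunc) ha.2 hb2)
      | succ n ih =>
        rw [hws]
        refine ⟨fun α hα => ?_, ?_⟩
        · rcases hα with h | ⟨x, hx, rfl⟩
          · exact ih.1 α h
          · exact hg x hx.2
        · refine lt_of_le_of_lt (mk_union_le _ _)
            (Cardinal.add_lt_of_lt (aleph0_le_lift_k hunc) ih.2 ?_)
          refine lt_of_le_of_lt mk_image_le ?_
          exact lt_of_le_of_lt (Cardinal.mk_le_mk_of_subset inter_subset_left) ih.2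
    set z : Set Ordinal.{0} := ⋃ n : ULift.{1} ℕ, w n.down with hz_def
    have hwz : ∀ n, w n ⊆ z := fun n => subset_iUnion_of_subset ⟨n⟩ (by rfl)
    have hzP : z ∈ Pk κ lam' := by
      refine ⟨fun α hα => ?_, ?_⟩
      · obtain ⟨_, ⟨n, rfl⟩, hαn⟩ := hα
        exact (hwP n.down).1 α hαn
      · refine card_iUnion_lt hreg ?_ (fun n => (hwP n.down).2)
        refine lt_of_le_of_lt ?_ (aleph0_lt_lift_k hunc)
        rw [Cardinal.mk_uLift, Cardinal.mk_nat, Cardinal.lift_aleph0]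
    refine ⟨z, ⟨hzP, ?_, ?_⟩, ?_⟩
    · exact subset_trans subset_union_right (hw0 ▸ hwz 0)
    · intro x hx hxlam
      obtain ⟨_, ⟨n, rfl⟩, hxn⟩ := hx
      refine hwz (n.down + 1) ?_
      rw [hws]
      exact Or.inr ⟨x, ⟨hxn, hxlam⟩, rfl⟩
    · exact subset_trans subset_union_left (hw0 ▸ hwz 0)
  · -- chain-closed
    intro δ h0 hδ f hf hmono
    refine ⟨Pk_chain_closed hreg δ h0 hδ f (fun β hβ => (hf β hβ).1) hmono, ?_, ?_⟩
    · refine subset_trans (hf 0 h0).2.1 ?_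
      exact subset_biUnion_of_mem h0
    · intro x hx hxlam
      simp only [mem_iUnion] at hx ⊢
      obtain ⟨β, hβ, hxβ⟩ := hx
      exact ⟨β, hβ, (hf β hβ).2.2 x hxβ hxlam⟩

def lamBig (lam : Cardinal.{0}) : Cardinal.{0} := (2 : Cardinal.{0}) ^ ((2 : Cardinal.{0}) ^ lam)

theorem le_lamBig (lam : Cardinal.{0}) : lam ≤ lamBig lam :=
  le_trans (Cardinal.cantor lam).le (Cardinal.power_le_power_left two_ne_zero (Cardinal.cantor lam).le)

theorem exists_coding (κ lam : Cardinal.{0}) :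
    ∃ code : {X : Set (Set Ordinal.{0}) // X ⊆ Pk κ lam} → Ordinal.{0},
      Function.Injective code ∧ ∀ X, code X < (lamBig lam).ord := by
  have h1 : #{X : Set (Set Ordinal.{0}) // X ⊆ Pk κ lam} ≤
      Cardinal.lift.{1} (lamBig lam) := by
    have he : #{X : Set (Set Ordinal.{0}) // X ⊆ Pk κ lam} = 2 ^ #(Pk κ lam) := by
      have : {X : Set (Set Ordinal.{0}) | X ⊆ Pk κ lam} = 𝒫 (Pk κ lam) := rfl
      rw [show {X : Set (Set Ordinal.{0}) // X ⊆ Pk κ lam} =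
        ↥(𝒫 (Pk κ lam)) from rfl, Cardinal.mk_powerset]
    rw [he]
    have h2 : #(Pk κ lam) ≤ 2 ^ Cardinal.lift.{1} lam := by
      have hsub : Pk κ lam ⊆ 𝒫 (Set.Iio lam.ord) := by
        intro a ha
        exact fun x hx => ha.1 x hx
      refine le_trans (Cardinal.mk_le_mk_of_subset hsub) ?_
      rw [Cardinal.mk_powerset, Ordinal.mk_Iio_ordinal, Cardinal.card_ord]
    calc (2 : Cardinal.{1}) ^ #(Pk κ lam) ≤ 2 ^ (2 ^ Cardinal.lift.{1} lam) :=
          Cardinal.power_le_power_left two_ne_zero h2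
      _ = Cardinal.lift.{1} (lamBig lam) := by
          rw [lamBig, Cardinal.lift_power, Cardinal.lift_power, Cardinal.lift_two]
  have h3 : #{X : Set (Set Ordinal.{0}) // X ⊆ Pk κ lam} ≤ #(Set.Iio (lamBig lam).ord) := by
    rwa [Ordinal.mk_Iio_ordinal, Cardinal.card_ord]
  obtain ⟨f⟩ := (Cardinal.le_def _ _).1 h3
  exact ⟨fun X => (f X : Ordinal.{0}),
    fun X Y hXY => f.injective (Subtype.ext hXY), fun X => (f X).2⟩

theorem reverse_dir {κ : Cardinal.{0}} (hreg : κ.IsRegular) (hunc : ℵ₀ < κ)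
    (hbr : ∀ lam : Cardinal.{0}, κ ≤ lam → ∀ d, IsList κ lam d → ∃ e, IsIneffBranch κ lam d e) :
    IsSupercompact κ := by
  classical
  intro lam hlam
  set lam' : Cardinal.{0} := lamBig lam with hlam'_def
  have hlamle : lam ≤ lam' := le_lamBig lam
  have hκlam' : κ ≤ lam' := hlam.trans hlamle
  obtain ⟨code, hinj, hcb⟩ := exists_coding κ lam
  set d' : Set Ordinal.{0} → Set Ordinal.{0} := fun a =>
    {β ∈ a | ∃ X : {X : Set (Set Ordinal.{0}) // X ⊆ Pk κ lam},
      code X = β ∧ (a ∩ Set.Iio lam.ord) ∈ X.1} with hd'_def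
  have hlist : IsList κ lam' d' := fun a _ β hβ => hβ.1
  obtain ⟨e, hebound, hSsub, heS⟩ := hbr lam' hκlam' d' hlist
  have hkey : ∀ a, a ∈ Pk κ lam' → e ∩ a = d' a →
      ∀ X : {X : Set (Set Ordinal.{0}) // X ⊆ Pk κ lam}, code X ∈ a →
      ((a ∩ Set.Iio lam.ord) ∈ X.1 ↔ code X ∈ e) := by
    intro a haP haE X hXa
    constructor
    · intro hmem
      have hm : code X ∈ d' a := ⟨hXa, X, rfl, hmem⟩
      rw [← haE] at hm
      exact hm.1
    · intro hXe
      have hm : code X ∈ d' a := by rw [← haE]; exact ⟨hXe, hXa⟩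
      obtain ⟨-, X', hX'c, hX'm⟩ := hm
      rwa [hinj hX'c] at hX'm
  set U : Set (Set (Set Ordinal.{0})) :=
    {Y | ∃ hY : Y ⊆ Pk κ lam, code ⟨Y, hY⟩ ∈ e} with hU_def
  have hmemU : ∀ Y (hY : Y ⊆ Pk κ lam), (Y ∈ U ↔ code ⟨Y, hY⟩ ∈ e) := by
    intro Y hY
    constructor
    · rintro ⟨hY', hc⟩
      have heq : (⟨Y, hY'⟩ : {X : Set (Set Ordinal.{0}) // X ⊆ Pk κ lam}) = ⟨Y, hY⟩ :=
        Subtype.ext rfl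
      rwa [heq] at hc
    · exact fun h => ⟨hY, h⟩
  have htouch : ∀ b : Set Ordinal.{0}, (∀ β ∈ b, β < lam'.ord) → #b < Cardinal.lift.{1} κ →
      ∀ g : Ordinal.{0} → Ordinal.{0}, (∀ x, x < lam.ord → g x < lam'.ord) →
      ∃ a, (a ∈ Pk κ lam' ∧ e ∩ a = d' a) ∧ b ⊆ a ∧ (∀ x ∈ a, x < lam.ord → g x ∈ a) := by
    intro b hb1 hb2 g hg
    obtain ⟨a, haS, haC⟩ := heS _ (closure_club hreg hunc b hb1 hb2 g hg)
    exact ⟨a, ⟨haS.1, haS.2⟩, haC.2.1, haC.2.2⟩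
  have h0ord : (0 : Ordinal.{0}) < lam'.ord := by
    rw [Cardinal.lt_ord, Ordinal.card_zero]
    exact lt_of_lt_of_le hreg.pos hκlam'
  set g0 : Ordinal.{0} → Ordinal.{0} := fun _ => 0 with hg0_def
  have hg0 : ∀ x, x < lam.ord → g0 x < lam'.ord := fun _ _ => h0ord
  have hfb : ∀ b : Set Ordinal.{0}, b.Finite → #b < Cardinal.lift.{1} κ :=
    fun b hb => lt_of_lt_of_le hb.lt_aleph0 (aleph0_le_lift_k hunc)
  refine ⟨U, ⟨?_, ?_, ?_, ?_, ?_, ?_⟩, ?_, ?_, ?_⟩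
  · -- subsets of Pk
    rintro A ⟨hAP, -⟩
    exact hAP
  · -- Pk ∈ U
    have hPX : Pk κ lam ⊆ Pk κ lam := subset_rfl
    obtain ⟨a, ⟨haP, haE⟩, hba, -⟩ := htouch {code ⟨Pk κ lam, hPX⟩}
      (by rintro β rfl; exact hcb _) (hfb _ (finite_singleton _)) g0 hg0
    exact ⟨hPX, (hkey a haP haE ⟨Pk κ lam, hPX⟩ (hba rfl)).1 (inter_Iio_mem_Pk haP)⟩
  · -- ∅ ∉ U
    rintro ⟨hP, hc⟩
    obtain ⟨a, ⟨haP, haE⟩, hba, -⟩ := htouch {code ⟨∅, hP⟩}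
      (by rintro β rfl; exact hcb _) (hfb _ (finite_singleton _)) g0 hg0
    have := (hkey a haP haE ⟨∅, hP⟩ (hba rfl)).2 hc
    exact absurd this (Set.notMem_empty _)
  · -- upward closure
    rintro A ⟨hAP, hcA⟩ B hAB hBP
    obtain ⟨a, ⟨haP, haE⟩, hba, -⟩ := htouch {code ⟨A, hAP⟩, code ⟨B, hBP⟩}
      (by rintro β (rfl | rfl) <;> exact hcb _)
      (hfb _ ((finite_singleton _).insert _)) g0 hg0
    have hAm := (hkey a haP haE ⟨A, hAP⟩ (hba (Or.inl rfl))).2 hcA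
    exact ⟨hBP, (hkey a haP haE ⟨B, hBP⟩ (hba (Or.inr rfl))).1 (hAB hAm)⟩
  · -- intersections
    rintro A ⟨hAP, hcA⟩ B ⟨hBP, hcB⟩
    have hABP : A ∩ B ⊆ Pk κ lam := fun x hx => hAP hx.1
    obtain ⟨a, ⟨haP, haE⟩, hba, -⟩ :=
      htouch {code ⟨A, hAP⟩, code ⟨B, hBP⟩, code ⟨A ∩ B, hABP⟩}
      (by rintro β (rfl | rfl | rfl) <;> exact hcb _)
      (hfb _ (((finite_singleton _).insert _).insert _)) g0 hg0
    have hAm := (hkey a haP haE ⟨A, hAP⟩ (hba (Or.inl rfl))).2 hcA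
    have hBm := (hkey a haP haE ⟨B, hBP⟩ (hba (Or.inr (Or.inl rfl)))).2 hcB
    exact ⟨hABP, (hkey a haP haE ⟨A ∩ B, hABP⟩
      (hba (Or.inr (Or.inr rfl)))).1 ⟨hAm, hBm⟩⟩
  · -- ultra
    intro A hAP
    have hcP : Pk κ lam \ A ⊆ Pk κ lam := diff_subset
    obtain ⟨a, ⟨haP, haE⟩, hba, -⟩ := htouch {code ⟨A, hAP⟩, code ⟨Pk κ lam \ A, hcP⟩}
      (by rintro β (rfl | rfl) <;> exact hcb _)
      (hfb _ ((finite_singleton _).insert _)) g0 hg0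
    by_cases hm : (a ∩ Set.Iio lam.ord) ∈ A
    · exact Or.inl ⟨hAP, (hkey a haP haE ⟨A, hAP⟩ (hba (Or.inl rfl))).1 hm⟩
    · refine Or.inr ⟨hcP, (hkey a haP haE ⟨Pk κ lam \ A, hcP⟩ (hba (Or.inr rfl))).1 ?_⟩
      exact ⟨inter_Iio_mem_Pk haP, hm⟩
  · -- κ-complete
    intro s hsU hscard
    have hsubs : ∀ Y ∈ s, Y ⊆ Pk κ lam := fun Y hY => (hsU hY).choose
    have hY0P : Pk κ lam ∩ ⋂₀ s ⊆ Pk κ lam := inter_subset_left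
    obtain ⟨a, ⟨haP, haE⟩, hba, -⟩ := htouch
      (insert (code ⟨Pk κ lam ∩ ⋂₀ s, hY0P⟩)
        (Set.range (fun Y : ↥s => code ⟨(Y : Set (Set Ordinal.{0})), hsubs Y Y.2⟩)))
      (by
        rintro β (rfl | ⟨Y, rfl⟩) <;> exact hcb _)
      (by
        refine lt_of_le_of_lt (Cardinal.mk_insert_le) ?_
        refine Cardinal.add_lt_of_lt (aleph0_le_lift_k hunc) ?_ ?_
        · exact lt_of_le_of_lt Cardinal.mk_range_le hscard
        · exact lt_of_lt_of_le one_lt_aleph0 (aleph0_le_lift_k hunc))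
      g0 hg0
    have hmem : (a ∩ Set.Iio lam.ord) ∈ Pk κ lam ∩ ⋂₀ s := by
      refine ⟨inter_Iio_mem_Pk haP, ?_⟩
      intro Y hY
      have hcY : code ⟨Y, hsubs Y hY⟩ ∈ e := (hmemU Y (hsubs Y hY)).1 (hsU hY)
      have hcYa : code ⟨Y, hsubs Y hY⟩ ∈ a := hba (Or.inr ⟨⟨Y, hY⟩, rfl⟩)
      exact (hkey a haP haE ⟨Y, hsubs Y hY⟩ hcYa).2 hcY
    exact ⟨hY0P, (hkey a haP haE ⟨Pk κ lam ∩ ⋂₀ s, hY0P⟩ (hba (Or.inl rfl))).1 hmem⟩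
  · -- fine
    intro x hx
    have hYP : {a ∈ Pk κ lam | x ∈ a} ⊆ Pk κ lam := fun a ha => ha.1
    obtain ⟨a, ⟨haP, haE⟩, hba, -⟩ := htouch {code ⟨{a ∈ Pk κ lam | x ∈ a}, hYP⟩, x}
      (by
        rintro β (rfl | rfl)
        · exact hcb _
        · exact lt_of_lt_of_le hx (Cardinal.ord_le_ord.2 hlamle))
      (hfb _ ((finite_singleton _).insert _)) g0 hg0
    refine ⟨hYP, (hkey a haP haE ⟨{a ∈ Pk κ lam | x ∈ a}, hYP⟩ (hba (Or.inl rfl))).1 ?_⟩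
    exact ⟨inter_Iio_mem_Pk haP, hba (Or.inr rfl), hx⟩
  · -- normal
    intro A hA
    have hsubA : ∀ x, x < lam.ord → A x ⊆ Pk κ lam := fun x hx => (hA x hx).choose
    have hZP : {a ∈ Pk κ lam | ∀ x ∈ a, a ∈ A x} ⊆ Pk κ lam := fun a ha => ha.1
    set g : Ordinal.{0} → Ordinal.{0} := fun x =>
      if hx : x < lam.ord then code ⟨A x, hsubA x hx⟩ else 0 with hg_def
    have hg : ∀ x, x < lam.ord → g x < lam'.ord := by
      intro x hx
      rw [hg_def]
      simp only [dif_pos hx]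
      exact hcb _
    obtain ⟨a, ⟨haP, haE⟩, hba, hclosed⟩ := htouch {code ⟨{a ∈ Pk κ lam | ∀ x ∈ a, a ∈ A x}, hZP⟩}
      (by rintro β rfl; exact hcb _) (hfb _ (finite_singleton _)) g hg
    have hZmem : (a ∩ Set.Iio lam.ord) ∈ {a ∈ Pk κ lam | ∀ x ∈ a, a ∈ A x} := by
      refine ⟨inter_Iio_mem_Pk haP, ?_⟩
      rintro x ⟨hxa, hxlam0⟩
      have hxlam : x < lam.ord := hxlam0
      have hga : g x ∈ a := hclosed x hxa hxlam
      rw [hg_def] at hga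
      simp only at hga
      rw [dif_pos hxlam] at hga
      have hce : code ⟨A x, hsubA x hxlam⟩ ∈ e :=
        (hmemU _ (hsubA x hxlam)).1 (hA x hxlam)
      exact (hkey a haP haE ⟨A x, hsubA x hxlam⟩ hga).2 hce
    exact ⟨hZP, (hkey a haP haE ⟨{a ∈ Pk κ lam | ∀ x ∈ a, a ∈ A x}, hZP⟩ (hba rfl)).1 hZmem⟩


theorem supercompact_iff_lists_have_ineffable_branches (κ : Cardinal.{0})
    (hreg : κ.IsRegular) (hunc : ℵ₀ < κ) :
    IsSupercompact κ ↔
      ∀ lam : Cardinal.{0}, κ ≤ lam →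
        ∀ d, IsList κ lam d → ∃ e, IsIneffBranch κ lam d e := by
  constructor
  · exact fun hsc => forward_dir hreg hunc hsc
  · exact fun h => reverse_dir hreg hunc h
end
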